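/- arXiv:1805.10052 — 5 statements merged into one kernel-verified Lean document; each statement's English description precedes it below -/
import Mathlib

section
/- Let α be an endomorphism of an abelian group A and B a subgroup of A with α(B) ⊆ B. Then α is integral if and only if the induced endomorphisms on B and on A/B are both integral. -/
open Polynomial

private lemma aux_intertwine {A A' : Type*} [AddCommGroup A] [AddCommGroup A']
    (f : A →+ A') (α : AddMonoid.End A) (α' : AddMonoid.End A')
    (h : ∀ a, f (α a) = α' (f a)) (p : ℤ[X]) (a : A) :
    f ((aeval α p) a) = (aeval α' p) (f a) := by
  have hmul : ∀ (β γ : AddMonoid.End A) x, (β * γ) x = β (γ x) := fun _ _ _ => rfl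
  have hmul' : ∀ (β γ : AddMonoid.End A') x, (β * γ) x = β (γ x) := fun _ _ _ => rfl
  have hadd : ∀ (β γ : AddMonoid.End A) x, (β + γ) x = β x + γ x := fun _ _ _ => rfl
  have hadd' : ∀ (β γ : AddMonoid.End A') x, (β + γ) x = β x + γ x := fun _ _ _ => rfl
  have hpow : ∀ n a, f ((α ^ n) a) = (α' ^ n) (f a) := by
    intro n
    induction n with
    | zero => intro a; simp [AddMonoid.End.one_apply]
    | succ n ih =>
      intro a
      rw [pow_succ, pow_succ, hmul, hmul', ih, h]
  induction p using Polynomial.induction_on' with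
  | add p q hp hq => simp only [map_add, hadd, hadd', hp, hq]
  | monomial n c =>
    simp only [aeval_monomial, hmul, hmul', algebraMap_int_eq,
      eq_intCast, AddMonoid.End.intCast_apply, map_zsmul, hpow]

/-- `α` is integral iff the endomorphisms induced on an invariant subgroup `B`
and on the quotient `A ⧸ B` are both integral. -/
theorem stmt2 {A : Type*} [AddCommGroup A] (α : AddMonoid.End A) (B : AddSubgroup A)
    (hB : ∀ b ∈ B, α b ∈ B) :
    IsIntegral ℤ α ↔
      (IsIntegral ℤ (show AddMonoid.End B from
        AddMonoidHom.codRestrict (AddMonoidHom.domRestrict (α : A →+ A) B) B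
          (fun b => hB b b.2)) ∧
       IsIntegral ℤ (show AddMonoid.End (A ⧸ B) from
        QuotientAddGroup.map B B (α : A →+ A) (fun b hb => hB b hb))) := by
  set β : AddMonoid.End B :=
    AddMonoidHom.codRestrict (AddMonoidHom.domRestrict (α : A →+ A) B) B (fun b => hB b b.2)
  set γ : AddMonoid.End (A ⧸ B) :=
    QuotientAddGroup.map B B (α : A →+ A) (fun b hb => hB b hb)
  have hβ : ∀ b : B, (B.subtype) (β b) = α (B.subtype b) := fun b => rfl
  have hγ : ∀ a : A, (QuotientAddGroup.mk' B) (α a) = γ ((QuotientAddGroup.mk' B) a) := by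
    intro a
    rfl
  constructor
  · rintro ⟨p, hp, hp0⟩
    have hp0' : aeval α p = 0 := hp0
    constructor
    · refine ⟨p, hp, ?_⟩
      show aeval β p = 0
      apply AddMonoid.End.ext; intro b
      apply Subtype.ext
      have := aux_intertwine B.subtype β α (fun b => (hβ b)) p b
      simpa [hp0'] using this
    · refine ⟨p, hp, ?_⟩
      show aeval γ p = 0
      have hsurj := QuotientAddGroup.mk'_surjective B
      apply AddMonoid.End.ext; intro x
      obtain ⟨a, rfl⟩ := hsurj x
      have := aux_intertwine (QuotientAddGroup.mk' B) α γ hγ p a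
      simp only [hp0'] at this
      simpa using this.symm
  · rintro ⟨⟨p, hp, hp0⟩, ⟨q, hq, hq0⟩⟩
    have hp0' : aeval β p = 0 := hp0
    have hq0' : aeval γ q = 0 := hq0
    refine ⟨p * q, hp.mul hq, ?_⟩
    show aeval α (p * q) = 0
    apply AddMonoid.End.ext; intro a
    have hmem : (aeval α q) a ∈ B := by
      have := aux_intertwine (QuotientAddGroup.mk' B) α γ hγ q a
      rw [hq0'] at this
      simpa [QuotientAddGroup.eq_zero_iff] using this
    have hkill : ∀ b ∈ B, (aeval α p) b = 0 := by
      intro b hb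
      have := aux_intertwine B.subtype β α (fun b => (hβ b)) p ⟨b, hb⟩
      rw [hp0'] at this
      simpa using this.symm
    have hcomp : (aeval α (p * q)) a = (aeval α p) ((aeval α q) a) := by
      rw [map_mul]; rfl
    simp only [hcomp, hkill _ hmem]
    rfl
end

section
/- Let G be a group, m an integer, and θ an automorphism of G such that θ(g) ∈ g^m·[G,G] for all g ∈ G (an m-powering automorphism). Then for every i ≥ 1, the automorphism induced by θ on the lower central quotient γ_i(G)/γ_{i+1}(G) is multiplication by m^i. -/
open scoped commutatorElement

section Aux

variable {Q : Type*} [Group Q]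

private lemma comm_mul_left_aux (a b y : Q) : ⁅a * b, y⁆ = a * ⁅b, y⁆ * a⁻¹ * ⁅a, y⁆ := by
  simp only [commutatorElement_def]; group

private lemma comm_mul_right_aux (a x y : Q) : ⁅a, x * y⁆ = ⁅a, x⁆ * (x * ⁅a, y⁆ * x⁻¹) := by
  simp only [commutatorElement_def]; group

variable {A : Q} (h : ∀ x : Q, ⁅A, x⁆ ∈ Subgroup.center Q)

include h

private lemma central_mul_right (x y : Q) : ⁅A, x * y⁆ = ⁅A, x⁆ * ⁅A, y⁆ := by
  have hc := Subgroup.mem_center_iff.mp (h y) x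
  rw [comm_mul_right_aux, hc, mul_inv_cancel_right]

/-- The map `x ↦ ⁅A, x⁆` as a monoid hom, when all such commutators are central. -/
private def commHom : Q →* Q := MonoidHom.mk' (fun x => ⁅A, x⁆) (central_mul_right h)

private lemma central_zpow_right (k : ℤ) (x : Q) : ⁅A, x ^ k⁆ = ⁅A, x⁆ ^ k :=
  map_zpow (commHom h) x k

private lemma central_inv_left (y : Q) : ⁅A⁻¹, y⁆ = ⁅A, y⁆⁻¹ := by
  have key : ⁅A⁻¹, y⁆ = A⁻¹ * ⁅A, y⁆⁻¹ * A := by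
    simp only [commutatorElement_def]; group
  have hc := Subgroup.mem_center_iff.mp (inv_mem (h y)) A⁻¹
  rw [key, hc, mul_assoc, inv_mul_cancel, mul_one]

private lemma central_pow_left (n : ℕ) (y : Q) : ⁅A ^ n, y⁆ = ⁅A, y⁆ ^ n := by
  induction n with
  | zero => simp
  | succ n ih =>
    have hc := Subgroup.mem_center_iff.mp (pow_mem (h y) n) A
    rw [pow_succ', comm_mul_left_aux, ih, hc, mul_inv_cancel_right, ← pow_succ]

private lemma central_zpow_left (M : ℤ) (y : Q) : ⁅A ^ M, y⁆ = ⁅A, y⁆ ^ M := by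
  cases M with
  | ofNat n => simpa using central_pow_left h n y
  | negSucc n =>
    have h' : ∀ x : Q, ⁅A ^ (n + 1), x⁆ ∈ Subgroup.center Q := fun x => by
      rw [central_pow_left h]; exact pow_mem (h x) _
    rw [zpow_negSucc, central_inv_left h', central_pow_left h, ← zpow_negSucc]

end Aux

private lemma quot_eq_iff {G : Type*} [Group G] {N : Subgroup G} [hn : N.Normal] {x y : G} :
    x * y⁻¹ ∈ N ↔ (QuotientGroup.mk x : G ⧸ N) = QuotientGroup.mk y := by
  rw [eq_comm, QuotientGroup.eq]
  exact ⟨fun hh => hn.mem_comm hh, fun hh => hn.mem_comm hh⟩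

/-- An `m`-powering automorphism `θ` (i.e. `θ g ∈ g^m·[G,G]` for all `g`) induces
multiplication by `m^i` on each lower central quotient `γᵢ(G)/γᵢ₊₁(G)`.
Here `γᵢ(G) = lowerCentralSeries G (i-1)`, so for `g ∈ lowerCentralSeries G i`
(that is, `g ∈ γᵢ₊₁(G)`) we have `θ g ≡ g^(m^(i+1)) mod γᵢ₊₂(G)`. -/
theorem stmt5 {G : Type*} [Group G] (m : ℤ) (θ : G ≃* G)
    (hθ : ∀ g : G, θ g * (g ^ m)⁻¹ ∈ commutator G) :
    ∀ i : ℕ, ∀ g ∈ (⊤ : Subgroup G).lowerCentralSeries i,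
      θ g * (g ^ (m ^ (i + 1)))⁻¹ ∈ (⊤ : Subgroup G).lowerCentralSeries (i + 1) := by
  intro i
  induction i with
  | zero => intro g _; simpa [commutator_def] using hθ g
  | succ i ih =>
    set N := (⊤ : Subgroup G).lowerCentralSeries (i + 2) with hN
    haveI : N.Normal := inferInstance
    set π : G →* G ⧸ N := QuotientGroup.mk' N with hπ
    have hker : ∀ x : G, x ∈ (⊤ : Subgroup G).lowerCentralSeries (i + 2) → π x = 1 := fun x hx =>
      (QuotientGroup.eq_one_iff x).mpr hx
    have hcent : ∀ x : G, x ∈ (⊤ : Subgroup G).lowerCentralSeries (i + 1) →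
        π x ∈ Subgroup.center (G ⧸ N) := by
      intro x hx
      rw [Subgroup.mem_center_iff]
      intro q
      obtain ⟨y, rfl⟩ := QuotientGroup.mk'_surjective N q
      have h1 : ⁅π x, π y⁆ = 1 := by
        rw [← map_commutatorElement]
        exact hker _ (Subgroup.commutator_mem_commutator hx (Subgroup.mem_top y))
      rw [commutatorElement_eq_one_iff_mul_comm] at h1
      exact h1.symm
    have key : ∀ x : G, x ∈ Subgroup.closure
        {x : G | ∃ p ∈ (⊤ : Subgroup G).lowerCentralSeries i, ∃ q ∈ (⊤ : Subgroup G), p * q * p⁻¹ * q⁻¹ = x} →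
        π (θ x) = π (x ^ m ^ (i + 2)) := by
      intro x hx
      induction hx using Subgroup.closure_induction with
      | one => simp
      | mul x y hx hy ihx ihy =>
        have hx' : x ∈ (⊤ : Subgroup G).lowerCentralSeries (i + 1) := hx
        have hcxy : Commute (π x) (π y) :=
          (Subgroup.mem_center_iff.mp (hcent x hx') (π y)).symm
        calc π (θ (x * y)) = π (θ x) * π (θ y) := by rw [map_mul, map_mul]
          _ = (π x) ^ m ^ (i + 2) * (π y) ^ m ^ (i + 2) := by
              rw [ihx, ihy, map_zpow, map_zpow]
          _ = (π x * π y) ^ m ^ (i + 2) := (hcxy.mul_zpow _).symm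
          _ = π ((x * y) ^ m ^ (i + 2)) := by rw [map_zpow, map_mul]
      | inv x hx ihx =>
        calc π (θ x⁻¹) = (π (θ x))⁻¹ := by rw [map_inv, map_inv]
          _ = ((π x) ^ m ^ (i + 2))⁻¹ := by rw [ihx, map_zpow]
          _ = π (x⁻¹ ^ m ^ (i + 2)) := by rw [map_zpow, map_inv, inv_zpow]
      | mem x hx =>
        obtain ⟨a, ha, b, -, rfl⟩ := hx
        show π (θ ⁅a, b⁆) = π (⁅a, b⁆ ^ m ^ (i + 2))
        have hA : ∀ q : G ⧸ N, ⁅π a, q⁆ ∈ Subgroup.center (G ⧸ N) := by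
          intro q
          obtain ⟨y, rfl⟩ := QuotientGroup.mk'_surjective N q
          rw [← map_commutatorElement]
          exact hcent _ (Subgroup.commutator_mem_commutator ha (Subgroup.mem_top y))
        have hAM : ∀ q : G ⧸ N, ⁅(π a) ^ (m ^ (i + 1)), q⁆ ∈ Subgroup.center (G ⧸ N) := by
          intro q
          rw [central_zpow_left hA]
          exact Subgroup.zpow_mem _ (hA q) _
        have hc : θ a * (a ^ m ^ (i + 1))⁻¹ ∈ (⊤ : Subgroup G).lowerCentralSeries (i + 1) := ih a ha
        have hθa : π (θ a) = π (θ a * (a ^ m ^ (i + 1))⁻¹) * (π a) ^ (m ^ (i + 1)) := by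
          rw [map_mul, map_inv, map_zpow, inv_mul_cancel_right]
        have hθb : π (θ b) = π (θ b * (b ^ m)⁻¹) * (π b) ^ m := by
          rw [map_mul, map_inv, map_zpow, inv_mul_cancel_right]
        set C := π (θ a * (a ^ m ^ (i + 1))⁻¹) with hCdef
        set D := π (θ b * (b ^ m)⁻¹) with hDdef
        have hCc : C ∈ Subgroup.center (G ⧸ N) := hcent _ hc
        have hAMD : ⁅(π a) ^ (m ^ (i + 1)), D⁆ = 1 := by
          have hcomm : commutator G ≤ ((commHom hAM).comp π).ker := by
            rw [commutator_def, Subgroup.commutator_le]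
            intro g₁ _ g₂ _
            simp only [MonoidHom.mem_ker, MonoidHom.comp_apply, map_commutatorElement]
            exact (commutatorElement_eq_one_iff_mul_comm).mpr
              (Subgroup.mem_center_iff.mp (hAM _) _).symm
          exact hcomm (hθ b)
        calc π (θ ⁅a, b⁆) = ⁅π (θ a), π (θ b)⁆ := by
              rw [map_commutatorElement, map_commutatorElement]
          _ = ⁅C * (π a) ^ (m ^ (i + 1)), D * (π b) ^ m⁆ := by rw [hθa, hθb]
          _ = C * ⁅(π a) ^ (m ^ (i + 1)), D * (π b) ^ m⁆ * C⁻¹ *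
                ⁅C, D * (π b) ^ m⁆ := comm_mul_left_aux _ _ _
          _ = ⁅(π a) ^ (m ^ (i + 1)), D * (π b) ^ m⁆ := by
              rw [(commutatorElement_eq_one_iff_mul_comm).mpr
                  (Subgroup.mem_center_iff.mp hCc _).symm, mul_one,
                Subgroup.mem_center_iff.mp (hAM (D * (π b) ^ m)) C, mul_inv_cancel_right]
          _ = ⁅(π a) ^ (m ^ (i + 1)), D⁆ *
                (D * ⁅(π a) ^ (m ^ (i + 1)), (π b) ^ m⁆ * D⁻¹) := comm_mul_right_aux _ _ _
          _ = D * ⁅(π a) ^ (m ^ (i + 1)), (π b) ^ m⁆ * D⁻¹ := by rw [hAMD, one_mul]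
          _ = ⁅(π a) ^ (m ^ (i + 1)), (π b) ^ m⁆ := by
              rw [Subgroup.mem_center_iff.mp (hAM ((π b) ^ m)) D, mul_inv_cancel_right]
          _ = ⁅π a, π b⁆ ^ (m * m ^ (i + 1)) := by
              rw [central_zpow_left hA, central_zpow_right hA, ← zpow_mul, mul_comm]
          _ = π (⁅a, b⁆ ^ m ^ (i + 2)) := by
              rw [map_zpow, map_commutatorElement, ← pow_succ']
    intro g hg
    have hg' := key g hg
    exact quot_eq_iff.mpr hg'
end

section
/- Let N be a torsion-free nilpotent group and let Γ be a subgroup of Aut(N) that acts nilpotently on N (i.e., the semidirect product Γ ⋉ N is nilpotent). Then Γ is torsion-free. -/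
/-- If `N` is a torsion-free nilpotent group and `Γ ≤ Aut N` acts nilpotently on `N`
(i.e. the semidirect product `Γ ⋉ N` is nilpotent), then `Γ` is torsion-free. -/
theorem stmt8 {N : Type*} [Group N] [Group.IsNilpotent N]
    (htf : ∀ g : N, g ≠ 1 → ¬IsOfFinOrder g) (Γ : Subgroup (MulAut N))
    (hnil : Group.IsNilpotent (SemidirectProduct N ↥Γ Γ.subtype)) :
    ∀ g : ↥Γ, g ≠ 1 → ¬IsOfFinOrder g := by
  set G := SemidirectProduct N ↥Γ Γ.subtype with hG
  intro g hg hfin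
  obtain ⟨n, hn, hgn⟩ := hfin.exists_pow_eq_one
  obtain ⟨c, hc⟩ := nilpotent_iff_lowerCentralSeries.mp hnil
  -- key claim: if Subgroup.lowerCentralSeries (⊤ : Subgroup G) (i + d) = ⊥ and inl x ∈ Subgroup.lowerCentralSeries (⊤ : Subgroup G) i,
  -- then g fixes x
  have key : ∀ d i, Subgroup.lowerCentralSeries (⊤ : Subgroup G) (i + d) = ⊥ →
      ∀ x : N, (SemidirectProduct.inl x : G) ∈ Subgroup.lowerCentralSeries (⊤ : Subgroup G) i →
        (g : MulAut N) x = x := by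
    intro d
    induction d with
    | zero =>
      intro i hbot x hx
      rw [Nat.add_zero] at hbot
      rw [hbot, Subgroup.mem_bot] at hx
      have : x = 1 := by
        have := SemidirectProduct.inl_injective (φ := Γ.subtype)
        exact this (by simpa using hx)
      simp [this]
    | succ d ih =>
      intro i hbot x hx
      set z : N := x⁻¹ * (g : MulAut N) x with hz
      -- inl z ∈ Subgroup.lowerCentralSeries (⊤ : Subgroup G) (i+1)
      have hzmem : (SemidirectProduct.inl z : G) ∈ Subgroup.lowerCentralSeries (⊤ : Subgroup G) (i + 1) := by
        have : (SemidirectProduct.inl z : G) =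
            (SemidirectProduct.inl x)⁻¹ * SemidirectProduct.inr g *
              SemidirectProduct.inl x * (SemidirectProduct.inr g)⁻¹ := by
          have h1 : (SemidirectProduct.inl ((Γ.subtype g) x) : G) =
              SemidirectProduct.inr g * SemidirectProduct.inl x *
                SemidirectProduct.inr g⁻¹ := SemidirectProduct.inl_aut g x
          simp only [hz, map_mul, map_inv]
          rw [show ((g : MulAut N) x) = (Γ.subtype g) x from rfl, h1]
          simp [mul_assoc]
        rw [this, Subgroup.lowerCentralSeries_succ]
        apply Subgroup.subset_closure
        exact ⟨(SemidirectProduct.inl x)⁻¹, (Subgroup.lowerCentralSeries (⊤ : Subgroup G) i).inv_mem hx,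
          SemidirectProduct.inr g, Subgroup.mem_top _, by simp [commutatorElement_def]; exact inv_inv _⟩
      have hfix : (g : MulAut N) z = z := ih (i + 1) (by rwa [show i + 1 + d = i + (d+1) by ring]) z hzmem
      -- g^k x = x * z^k
      have pow : ∀ k : ℕ, ((g : MulAut N) ^ k) x = x * z ^ k := by
        intro k
        induction k with
        | zero => simp
        | succ k ihk =>
          have h1 : ((g : MulAut N) ^ (k+1)) x = (g : MulAut N) (((g : MulAut N) ^ k) x) := by
            rw [pow_succ']; rfl
          rw [h1, ihk, map_mul]
          have hzk : (g : MulAut N) (z ^ k) = z ^ k := by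
            rw [map_pow, hfix]
          rw [hzk]
          have h2 : (g : MulAut N) x = x * z := by
            rw [hz]; group
          rw [h2, pow_succ', mul_assoc]
      have hzn : z ^ n = 1 := by
        have h1 : ((g : MulAut N) ^ n) x = x := by
          have : ((g : Γ) ^ n : Γ) = 1 := hgn
          have h2 : ((g : MulAut N) ^ n) = 1 := by
            have := congrArg (Subgroup.subtype Γ) this
            simpa using this
          rw [h2]; rfl
        have := pow n
        rw [h1] at this
        exact (mul_eq_left.mp this.symm)
      -- z = 1 by torsion-freeness
      have hz1 : z = 1 := by
        by_contra hne
        exact htf z hne (isOfFinOrder_iff_pow_eq_one.mpr ⟨n, hn, hzn⟩)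
      rw [hz, inv_mul_eq_one] at hz1
      exact hz1.symm
  have hfixall : ∀ x : N, (g : MulAut N) x = x := by
    intro x
    exact key c 0 (by simpa using hc) x (by simp [Subgroup.lowerCentralSeries])
  apply hg
  ext x
  · exact hfixall x
end

section
/- Let G be an elementary amenable group with a finite subnormal series 1 = G₀ ◁ G₁ ◁ ⋯ ◁ G_n = G in which every factor G_j/G_{j−1} is either infinite cyclic or locally finite. Let J be the set of indices j with G_j/G_{j−1} infinite cyclic, and for each j ∈ J choose g_j ∈ G_j generating G_j modulo G_{j−1}. Then the subgroup H = ⟨g_j : j ∈ J⟩ is a finitely generated subgroup of G with Hirsch length equal to that of G. -/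
universe u

/-- A group is locally finite if every finitely generated subgroup is finite. -/
def IsLocallyFiniteGroup (F : Type u) [Group F] : Prop :=
  ∀ T : Subgroup F, T.FG → Finite T

/-- An infinite cyclic group. -/
def IsInfiniteCyclic (F : Type u) [Group F] : Prop := IsCyclic F ∧ Infinite F

/-- `s` is a finite subnormal series of `G` whose factors are infinite cyclic (when
`c i = true`) or locally finite (when `c i = false`); each factor is presented by a
surjection from `s i.succ` whose kernel is `s i.castSucc`. -/
def IsGoodSeries {G : Type u} [Group G] {n : ℕ} (s : Fin (n + 1) → Subgroup G)
    (c : Fin n → Bool) : Prop :=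
  s 0 = ⊥ ∧ s (Fin.last n) = ⊤ ∧
  ∀ i : Fin n, s i.castSucc ≤ s i.succ ∧
    ∃ (F : Type u) (_ : Group F) (f : ↥(s i.succ) →* F),
      Function.Surjective f ∧
      (∀ x : ↥(s i.succ), f x = 1 ↔ (x : G) ∈ s i.castSucc) ∧
      (if c i then IsInfiniteCyclic F else IsLocallyFiniteGroup F)

/-- The Hirsch length of `G`: the number of infinite cyclic factors in a subnormal
series with infinite cyclic or locally finite factors (`⊤` if no such series exists).
Since this number is independent of the series, the infimum realizes it. -/
noncomputable def hirschLength (G : Type u) [Group G] : ℕ∞ :=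
  sInf {m : ℕ∞ | ∃ (n : ℕ) (s : Fin (n + 1) → Subgroup G) (c : Fin n → Bool),
    IsGoodSeries s c ∧ m = ((Finset.univ.filter fun i => c i = true).card : ℕ∞)}

/-- The class of elementary amenable groups: the smallest class of groups containing all
finite groups and all abelian groups and closed under extensions and directed unions. -/
inductive ElementaryAmenable : ∀ (G : Type u) [Group G], Prop
  | of_finite (G : Type u) [Group G] [Finite G] : ElementaryAmenable G
  | of_abelian (G : Type u) [Group G] (h : ∀ a b : G, a * b = b * a) : ElementaryAmenable G
  | of_extension (G : Type u) [Group G] (N : Subgroup G) [N.Normal]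
      (hN : ElementaryAmenable ↥N) (hQ : ElementaryAmenable (G ⧸ N)) :
      ElementaryAmenable G
  | of_directedUnion (G : Type u) [Group G] {ι : Type u} (S : ι → Subgroup G)
      (hdir : Directed (· ≤ ·) S) (hcover : ∀ g : G, ∃ i, g ∈ S i)
      (h : ∀ i, ElementaryAmenable ↥(S i)) : ElementaryAmenable G

section Helpers

variable {K : Type*} {L : Type*} [Group K] [Group L]

lemma locFin_of_finite (h : Finite K) : IsLocallyFiniteGroup K :=
  fun _ _ => Subtype.finite

lemma subgroup_fg_map {T : Subgroup K} (hT : T.FG) (φ : K →* L) : (T.map φ).FG := by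
  obtain ⟨S, hS, hSfin⟩ := (Subgroup.fg_iff T).mp hT
  exact (Subgroup.fg_iff _).mpr ⟨φ '' S, by rw [← MonoidHom.map_closure, hS], hSfin.image _⟩

lemma finite_subgroup_map {T : Subgroup K} (hT : Finite T) (φ : K →* L) :
    Finite (T.map φ) := by
  have : Finite (T : Set K) := hT
  have h : ((T.map φ : Subgroup L) : Set L) = φ '' (T : Set K) := Subgroup.coe_map _ _
  exact Set.Finite.to_subtype (h ▸ Set.Finite.image φ (Set.toFinite _))

lemma locFin_of_injective (φ : K →* L) (h : Function.Injective φ)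
    (hL : IsLocallyFiniteGroup L) : IsLocallyFiniteGroup K := by
  intro T hT
  have h2 : Finite (T.map φ) := hL _ (subgroup_fg_map hT φ)
  exact Finite.of_equiv _ (T.equivMapOfInjective φ h).symm.toEquiv

lemma locFin_of_surjective (φ : K →* L) (h : Function.Surjective φ)
    (hK : IsLocallyFiniteGroup K) : IsLocallyFiniteGroup L := by
  intro T hT
  obtain ⟨S, hS, hSfin⟩ := (Subgroup.fg_iff T).mp hT
  set S' : Set K := (fun y => Classical.choose (h y)) '' S with hS'
  have hfin' : Finite (Subgroup.closure S') :=
    hK _ ((Subgroup.fg_iff _).mpr ⟨S', rfl, hSfin.image _⟩)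
  have himg : (Subgroup.closure S').map φ = T := by
    rw [MonoidHom.map_closure, ← hS]
    congr 1
    rw [hS', ← Set.image_comp]
    conv_rhs => rw [← Set.image_id S]
    apply Set.image_congr
    intro y _
    exact Classical.choose_spec (h y)
  rw [← himg]
  exact finite_subgroup_map hfin' φ

lemma fg_top_of_cyclic {F : Type*} [Group F] (h : IsCyclic F) : (⊤ : Subgroup F).FG := by
  obtain ⟨g, hg⟩ := h.exists_generator
  have htop : (⊤ : Subgroup F) = Subgroup.zpowers g := by
    ext x; simpa using hg x
  rw [htop, Subgroup.zpowers_eq_closure]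
  exact (Subgroup.fg_iff _).mpr ⟨{g}, rfl, Set.finite_singleton g⟩

lemma not_locFin_of_infCyclic {F : Type u} [Group F] (h : IsInfiniteCyclic F) :
    ¬ IsLocallyFiniteGroup F := by
  obtain ⟨hc, hinf⟩ := h
  intro hlf
  have h1 : Finite (⊤ : Subgroup F) := hlf ⊤ (fg_top_of_cyclic hc)
  have h2 : Finite F := Finite.of_equiv ↥(⊤ : Subgroup F) Subgroup.topEquiv.toEquiv
  exact not_finite F

/-- a cyclic locally finite group is finite -/
lemma finite_of_cyclic_locFin {F : Type*} [Group F] (hc : IsCyclic F)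
    (hlf : IsLocallyFiniteGroup F) : Finite F := by
  have : Finite (⊤ : Subgroup F) := hlf ⊤ (fg_top_of_cyclic hc)
  exact Finite.of_equiv ↥(⊤ : Subgroup F) Subgroup.topEquiv.toEquiv

lemma infCyclic_of_mulEquiv {F F' : Type*} [Group F] [Group F'] (e : F ≃* F')
    (h : IsInfiniteCyclic F) : IsInfiniteCyclic F' := by
  obtain ⟨h1, h2⟩ := h
  exact ⟨isCyclic_of_surjective e.toMonoidHom e.surjective,
    Infinite.of_injective e e.injective⟩

/-- in an infinite cyclic group, every non-identity element has infinite order. -/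
lemma infCyclic_infinite_order {F : Type*} [Group F] (h : IsInfiniteCyclic F)
    {a : F} (ha : a ≠ 1) : ¬ IsOfFinOrder a := by
  obtain ⟨hc, hinf⟩ := h
  obtain ⟨g, hg⟩ := hc.exists_generator
  intro hfin
  obtain ⟨k, hk'⟩ := hg a
  have hk : g ^ k = a := hk'
  have hgfin : IsOfFinOrder g := by
    obtain ⟨m, hm, hm1⟩ := isOfFinOrder_iff_pow_eq_one.mp hfin
    have hk0 : k ≠ 0 := by rintro rfl; simp at hk; exact ha hk.symm
    rw [isOfFinOrder_iff_zpow_eq_one]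
    refine ⟨k * m, mul_ne_zero hk0 (by exact_mod_cast hm.ne'), ?_⟩
    rw [zpow_mul, hk]
    exact_mod_cast hm1
  have hfin2 : (Subgroup.zpowers g : Set F).Finite := hgfin.finite_zpowers
  have huniv : (Set.univ : Set F) = (Subgroup.zpowers g : Set F) := by
    ext x; simpa using hg x
  exact Set.infinite_univ (huniv ▸ hfin2)

/-- a nontrivial subgroup of an infinite cyclic group is infinite cyclic. -/
lemma infCyclic_subgroup {F : Type*} [Group F] (h : IsInfiniteCyclic F)
    (A : Subgroup F) (hA : Nontrivial A) : IsInfiniteCyclic A := by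
  have hcyc : IsCyclic A := @Subgroup.isCyclic F _ h.1 A
  obtain ⟨⟨a, haA⟩, h1⟩ := exists_ne (1 : A)
  have ha1 : a ≠ 1 := fun hh => h1 (Subtype.ext hh)
  have : ¬ IsOfFinOrder a := infCyclic_infinite_order h ha1
  have hzp : (Subgroup.zpowers a : Set F).Infinite := by
    rwa [infinite_zpowers]
  have hsub : (Subgroup.zpowers a : Set F) ⊆ (A : Set F) := by
    intro x hx
    obtain ⟨k, hk⟩ := hx
    exact hk ▸ zpow_mem haA k
  have : (A : Set F).Infinite := hzp.mono hsub
  exact ⟨hcyc, this.to_subtype⟩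

/-- a quotient (surjective image, with kernel hitting a nontrivial element) of an
infinite cyclic group is finite -/
lemma finite_of_surj_infCyclic {F Q : Type*} [Group F] [Group Q]
    (h : IsInfiniteCyclic F) (ψ : F →* Q) (hsurj : Function.Surjective ψ)
    {a : F} (ha : a ≠ 1) (hker : ψ a = 1) : Finite Q := by
  obtain ⟨hc, hinf⟩ := h
  obtain ⟨g, hg⟩ := hc.exists_generator
  obtain ⟨k, hk'⟩ := hg a
  have hk : g ^ k = a := hk'
  have hk0 : k ≠ 0 := by rintro rfl; simp at hk; exact ha hk.symm
  have hford : IsOfFinOrder (ψ g) := by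
    rw [isOfFinOrder_iff_zpow_eq_one]
    exact ⟨k, hk0, by rw [← map_zpow, hk, hker]⟩
  have huniv : (Set.univ : Set Q) = (Subgroup.zpowers (ψ g) : Set Q) := by
    ext x
    simp only [Set.mem_univ, true_iff]
    obtain ⟨y, rfl⟩ := hsurj x
    obtain ⟨m, hm⟩ := hg y
    exact ⟨m, by rw [← hm, map_zpow]⟩
  have : (Set.univ : Set Q).Finite := huniv ▸ hford.finite_zpowers
  exact Set.finite_univ_iff.mp this

end Helpers
section Part2
variable {K : Type u} [Group K]

/-- number of `true`s -/
def bcount {n : ℕ} (c : Fin n → Bool) : ℕ := (Finset.univ.filter fun i => c i = true).card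

lemma bcount_succ {n : ℕ} (c : Fin (n+1) → Bool) :
    bcount c = bcount (fun i : Fin n => c i.castSucc) + (if c (Fin.last n) then 1 else 0) := by
  unfold bcount
  rw [Finset.card_filter, Finset.card_filter, Fin.sum_univ_castSucc]

lemma bcount_eq_sum {n : ℕ} (c : Fin n → Bool) :
    bcount c = ∑ i, (if c i then 1 else 0) := by
  unfold bcount; rw [Finset.card_filter]

lemma chain_mono {m : ℕ} {t : Fin (m+1) → Subgroup K}
    (h : ∀ i : Fin m, t i.castSucc ≤ t i.succ) : Monotone t := by
  have key : ∀ q (hq : q < m+1) p (hp : p < m+1), p ≤ q → t ⟨p,hp⟩ ≤ t ⟨q,hq⟩ := by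
    intro q
    induction q with
    | zero =>
      intro hq p hp hpq
      obtain rfl : p = 0 := Nat.le_zero.mp hpq
      exact le_rfl
    | succ q ih =>
      intro hq p hp hpq
      rcases Nat.eq_or_lt_of_le hpq with rfl | hlt
      · exact le_rfl
      · have hq' : q < m + 1 := by omega
        refine le_trans (ih hq' p hp (by omega)) ?_
        have hqm : q < m := by omega
        exact h ⟨q, hqm⟩
  intro j k hjk
  exact key k.val k.isLt j.val j.isLt hjk

lemma chain_bot_step {m : ℕ} {t : Fin (m+1) → Subgroup K} (h0 : t 0 = ⊥)
    (hstep : ∀ i : Fin m, t i.castSucc = ⊥ → t i.succ = ⊥) : ∀ j, t j = ⊥ := by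
  have key : ∀ p (hp : p < m+1), t ⟨p, hp⟩ = ⊥ := by
    intro p
    induction p with
    | zero => intro hp; exact h0
    | succ p ih =>
      intro hp
      have hpm : p < m := by omega
      exact hstep ⟨p, hpm⟩ (ih (by omega))
  intro j; have := key j.val j.isLt; simpa using this
end Part2


section Part3
variable {K : Type u} [Group K]

lemma top_eq_bot_iff_subsingleton : (⊤ : Subgroup K) = ⊥ ↔ Subsingleton K := by
  constructor
  · intro h
    refine ⟨fun a b => ?_⟩
    have ha : a ∈ (⊥ : Subgroup K) := h ▸ Subgroup.mem_top a
    have hb : b ∈ (⊥ : Subgroup K) := h ▸ Subgroup.mem_top b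
    rw [Subgroup.mem_bot] at ha hb
    rw [ha, hb]
  · intro h
    ext x
    simp [Subgroup.mem_bot, Subsingleton.elim x 1]

lemma goodSeries_locFin_all_false (hK : IsLocallyFiniteGroup K) {m : ℕ}
    {t : Fin (m+1) → Subgroup K} {d : Fin m → Bool} (h : IsGoodSeries t d) :
    ∀ i, d i = false := by
  intro i
  obtain ⟨F, _, f, hsurj, hker, hprop⟩ := (h.2.2 i).2
  have h1 : IsLocallyFiniteGroup ↥(t i.succ) :=
    locFin_of_injective (t i.succ).subtype (t i.succ).subtype_injective hK
  have h2 : IsLocallyFiniteGroup F := locFin_of_surjective f hsurj h1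
  cases hd : d i with
  | false => rfl
  | true =>
    rw [hd] at hprop
    simp only [if_true] at hprop
    exact absurd h2 (not_locFin_of_infCyclic hprop)

lemma goodSeries_locFin_count (hK : IsLocallyFiniteGroup K) {m : ℕ}
    {t : Fin (m+1) → Subgroup K} {d : Fin m → Bool} (h : IsGoodSeries t d) :
    bcount d = 0 := by
  unfold bcount
  rw [Finset.card_eq_zero, Finset.filter_eq_empty_iff]
  intro i _
  simp [goodSeries_locFin_all_false hK h i]

lemma goodSeries_infCyclic_count (hK : IsInfiniteCyclic K) {m : ℕ}
    {t : Fin (m+1) → Subgroup K} {d : Fin m → Bool} (h : IsGoodSeries t d) :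
    bcount d = 1 := by
  obtain ⟨h0, htop, hfac⟩ := h
  have hmono : Monotone t := chain_mono (fun i => (hfac i).1)
  have hKnt : Nontrivial K := by
    have := hK.2; exact Infinite.instNontrivial K
  -- characterization of the true labels
  have hchar : ∀ i : Fin m, d i = true ↔ (t i.castSucc = ⊥ ∧ t i.succ ≠ ⊥) := by
    intro i
    obtain ⟨F, _, f, hsurj, hker, hprop⟩ := (hfac i).2
    constructor
    · intro hd
      rw [hd] at hprop
      simp only [if_true] at hprop
      constructor
      · by_contra hne
        obtain ⟨a, ha1⟩ := Subgroup.ne_bot_iff_exists_ne_one.mp hne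
        set ahat : ↥(t i.succ) := ⟨(a : K), (hfac i).1 a.2⟩ with hahat
        have hahat1 : ahat ≠ 1 := by
          intro hh
          have hval : (a : K) = 1 := congrArg Subtype.val hh
          exact ha1 (Subtype.ext hval)
        have hnt : Nontrivial ↥(t i.succ) := ⟨⟨ahat, 1, hahat1⟩⟩
        have hic : IsInfiniteCyclic ↥(t i.succ) := infCyclic_subgroup hK _ hnt
        have hfahat : f ahat = 1 := (hker ahat).mpr a.2
        have hFfin : Finite F := finite_of_surj_infCyclic hic f hsurj hahat1 hfahat
        exact absurd hprop.2 (not_infinite_iff_finite.mpr hFfin)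
      · intro hbot
        have hss : Subsingleton ↥(t i.succ) := by rw [hbot]; infer_instance
        have : Subsingleton F := hsurj.subsingleton
        exact absurd hprop.2 (not_infinite_iff_finite.mpr (Finite.of_subsingleton))
    · rintro ⟨h1, h2⟩
      have hfinj : Function.Injective f := by
        intro x y hxy
        have hxy1 : f (x * y⁻¹) = 1 := by rw [map_mul, map_inv, hxy, mul_inv_cancel]
        have := (hker _).mp hxy1
        rw [h1, Subgroup.mem_bot] at this
        have : x * y⁻¹ = 1 := by
          apply Subtype.ext
          simpa using this
        rw [mul_inv_eq_one] at this
        exact this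
      have hnt : Nontrivial ↥(t i.succ) := by
        obtain ⟨a, ha⟩ := Subgroup.ne_bot_iff_exists_ne_one.mp h2
        exact ⟨⟨a, 1, ha⟩⟩
      have hic : IsInfiniteCyclic ↥(t i.succ) := infCyclic_subgroup hK _ hnt
      have hicF : IsInfiniteCyclic F := by
        refine ⟨isCyclic_of_surjective f hsurj (hH := hic.1), ?_⟩
        have := hic.2
        exact Infinite.of_injective f hfinj
      cases hd : d i with
      | true => rfl
      | false =>
        have hprop' : IsLocallyFiniteGroup F := by simpa [hd] using hprop
        exact absurd hprop' (not_locFin_of_infCyclic hicF)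
  -- existence of the jump
  obtain ⟨istar, histar⟩ : ∃ i : Fin m, t i.castSucc = ⊥ ∧ t i.succ ≠ ⊥ := by
    by_contra hcon
    push_neg at hcon
    have := chain_bot_step h0 hcon (Fin.last m)
    rw [htop, top_eq_bot_iff_subsingleton] at this
    exact (not_subsingleton K) this
  have huniq : ∀ i : Fin m, (t i.castSucc = ⊥ ∧ t i.succ ≠ ⊥) → i = istar := by
    rintro i ⟨hi1, hi2⟩
    by_contra hne
    rcases lt_or_gt_of_ne hne with hlt | hgt
    · have hle : i.succ ≤ istar.castSucc := by
        simp only [Fin.le_def, Fin.lt_def] at *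
        simpa using hlt
      have : t i.succ ≤ (⊥ : Subgroup K) := histar.1 ▸ hmono hle
      exact hi2 (le_bot_iff.mp this)
    · have hle : istar.succ ≤ i.castSucc := by
        simp only [Fin.le_def, Fin.lt_def] at *
        simpa using hgt
      have : t istar.succ ≤ (⊥ : Subgroup K) := hi1 ▸ hmono hle
      exact histar.2 (le_bot_iff.mp this)
  unfold bcount
  rw [Finset.card_eq_one]
  refine ⟨istar, ?_⟩
  ext i
  simp only [Finset.mem_filter, Finset.mem_univ, true_and, Finset.mem_singleton]
  constructor
  · intro hd
    exact huniq i ((hchar i).mp hd)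
  · rintro rfl
    exact (hchar i).mpr histar

end Part3

section Part4
variable {G : Type u} [Group G]

/-- inclusion of `H.subgroupOf N` into `H`. -/
def inclSub (H N : Subgroup G) : ↥(H.subgroupOf N) →* ↥H where
  toFun x := ⟨((x : ↥N) : G), Subgroup.mem_subgroupOf.mp x.2⟩
  map_one' := rfl
  map_mul' _ _ := rfl

lemma inclSub_coe (H N : Subgroup G) (x : ↥(H.subgroupOf N)) :
    ((inclSub H N x : ↥H) : G) = ((x : ↥N) : G) := rfl

lemma goodSeries_decompose (N : Subgroup G) [hN : N.Normal]
    {m : ℕ} {t : Fin (m+1) → Subgroup G} {d : Fin m → Bool} (h : IsGoodSeries t d) :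
    ∃ dN dQ : Fin m → Bool,
      IsGoodSeries (fun j => (t j).subgroupOf N) dN ∧
      IsGoodSeries (fun j => (t j).map (QuotientGroup.mk' N)) dQ ∧
      ∀ i, (if dN i then 1 else 0) + (if dQ i then 1 else 0) = (if d i then (1:ℕ) else 0) := by
  classical
  obtain ⟨h0, htop, hfac⟩ := h
  have hmono : ∀ i : Fin m, t i.castSucc ≤ t i.succ := fun i => (hfac i).1
  choose F instF f hsurj hker hprop using fun i => (hfac i).2
  -- normality of each step
  have hnormal : ∀ (i : Fin m) (a x : G), a ∈ t i.castSucc → x ∈ t i.succ →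
      x * a * x⁻¹ ∈ t i.castSucc := by
    intro i a x ha hx
    have ha' : f i ⟨a, hmono i ha⟩ = 1 := (hker i _).mpr ha
    have : f i (⟨x, hx⟩ * ⟨a, hmono i ha⟩ * (⟨x, hx⟩)⁻¹) = 1 := by
      rw [map_mul, map_mul, map_inv, ha', mul_one, mul_inv_cancel]
    exact (hker i _).mp this
  set π : G →* G ⧸ N := QuotientGroup.mk' N with hπdef
  have hπ : Function.Surjective π := QuotientGroup.mk'_surjective N
  set u : Fin (m+1) → Subgroup ↥N := fun j => (t j).subgroupOf N with hu
  set v : Fin (m+1) → Subgroup (G ⧸ N) := fun j => (t j).map π with hv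
  -- the subgroup of F i coming from N
  set A : ∀ i : Fin m, Subgroup (F i) :=
    fun i => ((f i).comp (inclSub (t i.succ) N)).range with hA
  set dN : Fin m → Bool := fun i => d i && (if Nontrivial ↥(A i) then true else false) with hdN
  set dQ : Fin m → Bool := fun i => d i && !(if Nontrivial ↥(A i) then true else false) with hdQ
  refine ⟨dN, dQ, ?_, ?_, ?_⟩
  · -- good series on N
    refine ⟨?_, ?_, ?_⟩
    · show (t 0).subgroupOf N = ⊥
      rw [h0]; exact Subgroup.bot_subgroupOf N
    · show (t (Fin.last m)).subgroupOf N = ⊤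
      rw [htop]; exact Subgroup.top_subgroupOf N
    intro i
    refine ⟨Subgroup.comap_mono (hmono i), ?_⟩
    refine ⟨↥(A i), inferInstance, ((f i).comp (inclSub (t i.succ) N)).rangeRestrict,
      MonoidHom.rangeRestrict_surjective _, ?_, ?_⟩
    · intro x
      rw [Subtype.ext_iff]
      have hcoe : (((f i).comp (inclSub (t i.succ) N)).rangeRestrict x : F i)
          = f i (inclSub (t i.succ) N x) := rfl
      rw [hcoe]
      have h1 : (1 : ↥(A i)) = (⟨1, one_mem _⟩ : ↥(A i)) := rfl
      constructor
      · intro hh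
        have : f i (inclSub (t i.succ) N x) = 1 := by
          simpa using hh
        have := (hker i _).mp this
        rw [inclSub_coe] at this
        exact Subgroup.mem_subgroupOf.mpr this
      · intro hh
        have : ((inclSub (t i.succ) N x : ↥(t i.succ)) : G) ∈ t i.castSucc := by
          rw [inclSub_coe]
          exact Subgroup.mem_subgroupOf.mp hh
        have := (hker i _).mpr this
        simpa using this
    · by_cases hd : d i = true
      · by_cases hnt : Nontrivial ↥(A i)
        · have : dN i = true := by simp [hdN, hd, hnt]
          rw [this]
          simp only [if_true]
          have hic : IsInfiniteCyclic (F i) := by simpa [hd] using hprop i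
          exact infCyclic_subgroup hic (A i) hnt
        · have : dN i = false := by simp [hdN, hnt]
          rw [this]
          simp only [Bool.false_eq_true, if_false]
          have hss : Subsingleton ↥(A i) := not_nontrivial_iff_subsingleton.mp hnt
          exact locFin_of_finite Finite.of_subsingleton
      · have : dN i = false := by simp [hdN, hd]
        rw [this]
        simp only [Bool.false_eq_true, if_false]
        have hlf : IsLocallyFiniteGroup (F i) := by simpa [hd] using hprop i
        exact locFin_of_injective (A i).subtype (A i).subtype_injective hlf
  · -- good series on G ⧸ N
    refine ⟨?_, ?_, ?_⟩
    · show (t 0).map π = ⊥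
      rw [h0]; exact Subgroup.map_bot π
    · show (t (Fin.last m)).map π = ⊤
      rw [htop]
      exact Subgroup.map_top_of_surjective π hπ
    intro i
    refine ⟨Subgroup.map_mono (hmono i), ?_⟩
    -- set up the quotient factor
    set B : Subgroup ↥(v i.succ) := (v i.castSucc).subgroupOf (v i.succ) with hB
    have hBnormal : B.Normal := by
      constructor
      rintro b hb γ
      have hb' : (b : G ⧸ N) ∈ (t i.castSucc).map π := Subgroup.mem_subgroupOf.mp hb
      rw [Subgroup.mem_map] at hb'
      obtain ⟨a, ha, hab⟩ := hb'
      have hγ' : (γ : G ⧸ N) ∈ (t i.succ).map π := γ.2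
      rw [Subgroup.mem_map] at hγ'
      obtain ⟨x, hx, hxγ⟩ := hγ'
      refine Subgroup.mem_subgroupOf.mpr ?_
      have : ((γ * b * γ⁻¹ : ↥(v i.succ)) : G ⧸ N) = π (x * a * x⁻¹) := by
        push_cast
        rw [← hab, ← hxγ]
        simp [map_mul]
      rw [this]
      exact Subgroup.mem_map_of_mem π (hnormal i a x ha hx)
    haveI := hBnormal
    refine ⟨↥(v i.succ) ⧸ B, inferInstance, QuotientGroup.mk' B,
      QuotientGroup.mk'_surjective B, ?_, ?_⟩
    · intro x
      rw [show ((QuotientGroup.mk' B) x = 1) ↔ x ∈ B from QuotientGroup.eq_one_iff x]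
      exact Subgroup.mem_subgroupOf
    · -- identify the factor as a quotient of F i
      set θ : ↥(t i.succ) →* ↥(v i.succ) :=
        (π.comp (t i.succ).subtype).codRestrict (v i.succ)
          (fun x => Subgroup.mem_map_of_mem π x.2) with hθ
      have hθsurj : Function.Surjective θ := by
        rintro ⟨y, hy⟩
        rw [Subgroup.mem_map] at hy
        obtain ⟨x, hx, rfl⟩ := hy
        exact ⟨⟨x, hx⟩, rfl⟩
      set θ' : ↥(t i.succ) →* (↥(v i.succ) ⧸ B) := (QuotientGroup.mk' B).comp θ with hθ'
      have hθ'surj : Function.Surjective θ' :=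
        (QuotientGroup.mk'_surjective B).comp hθsurj
      have hθ'ker : ∀ x : ↥(t i.succ), θ' x = 1 ↔ (π (x : G)) ∈ v i.castSucc := by
        intro x
        rw [show (θ' x = 1) ↔ θ x ∈ B from QuotientGroup.eq_one_iff (θ x)]
        rw [hB, Subgroup.mem_subgroupOf]
        rfl
      have hkerle : (f i).ker ≤ θ'.ker := by
        intro x hx
        rw [MonoidHom.mem_ker] at hx ⊢
        rw [hθ'ker]
        exact Subgroup.mem_map_of_mem π ((hker i x).mp hx)
      set ψ : F i →* (↥(v i.succ) ⧸ B) :=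
        (f i).liftOfRightInverse (Function.surjInv (hsurj i))
          (Function.rightInverse_surjInv (hsurj i)) ⟨θ', hkerle⟩ with hψ
      have hcomm : ∀ x : ↥(t i.succ), ψ (f i x) = θ' x := fun x =>
        (f i).liftOfRightInverse_comp_apply _ _ ⟨θ', hkerle⟩ x
      have hψsurj : Function.Surjective ψ := by
        intro y
        obtain ⟨x, rfl⟩ := hθ'surj y
        exact ⟨f i x, hcomm x⟩
      by_cases hd : d i = true
      · have hic : IsInfiniteCyclic (F i) := by simpa [hd] using hprop i
        by_cases hnt : Nontrivial ↥(A i)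
        · -- A i nontrivial : quotient is finite
          have : dQ i = false := by simp [hdQ, hnt]
          rw [this]
          simp only [Bool.false_eq_true, if_false]
          obtain ⟨⟨z, hz⟩, hz1⟩ := exists_ne (1 : ↥(A i))
          have hzne : z ≠ 1 := fun hh => hz1 (Subtype.ext hh)
          obtain ⟨w, hw⟩ := hz
          have hψz : ψ z = 1 := by
            rw [← hw]
            have : ((f i).comp (inclSub (t i.succ) N)) w = f i (inclSub (t i.succ) N w) := rfl
            rw [this, hcomm]
            rw [hθ'ker]
            have : π ((inclSub (t i.succ) N w : ↥(t i.succ)) : G) = 1 := by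
              rw [inclSub_coe]
              exact (QuotientGroup.eq_one_iff _).mpr (w : ↥N).2
            rw [this]
            exact one_mem _
          exact locFin_of_finite (finite_of_surj_infCyclic hic ψ hψsurj hzne hψz)
        · -- A i trivial : ψ is injective, quotient is infinite cyclic
          have : dQ i = true := by simp [hdQ, hd, hnt]
          rw [this]
          simp only [if_true]
          have hss : Subsingleton ↥(A i) := not_nontrivial_iff_subsingleton.mp hnt
          have hψinj : Function.Injective ψ := by
            rw [injective_iff_map_eq_one]
            intro z hz
            obtain ⟨x, rfl⟩ := hsurj i z
            rw [hcomm, hθ'ker] at hz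
            rw [Subgroup.mem_map] at hz
            obtain ⟨a, ha, hax⟩ := hz
            -- w := a⁻¹ * x ∈ N ∩ t i.succ
            have hwN : a⁻¹ * (x : G) ∈ N := by
              have : π (a⁻¹ * (x : G)) = 1 := by
                rw [map_mul, map_inv, hax, inv_mul_cancel]
              exact (QuotientGroup.eq_one_iff _).mp this
            have hwt : a⁻¹ * (x : G) ∈ t i.succ :=
              mul_mem (inv_mem (hmono i ha)) x.2
            set what : ↥(u i.succ) := ⟨⟨a⁻¹ * (x : G), hwN⟩, Subgroup.mem_subgroupOf.mpr hwt⟩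
              with hwhat
            have hin : f i (inclSub (t i.succ) N what) ∈ A i :=
              ⟨what, rfl⟩
            have : (⟨f i (inclSub (t i.succ) N what), hin⟩ : ↥(A i)) = ⟨1, one_mem _⟩ :=
              Subsingleton.elim _ _
            have hf1 : f i (inclSub (t i.succ) N what) = 1 := congrArg Subtype.val this
            have hwmem : a⁻¹ * (x : G) ∈ t i.castSucc := by
              have := (hker i _).mp hf1
              rwa [inclSub_coe] at this
            have hxmem : (x : G) ∈ t i.castSucc := by
              have : a * (a⁻¹ * (x : G)) ∈ t i.castSucc := mul_mem ha hwmem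
              rwa [← mul_assoc, mul_inv_cancel, one_mul] at this
            exact (hker i x).mpr hxmem
          exact infCyclic_of_mulEquiv (MulEquiv.ofBijective ψ ⟨hψinj, hψsurj⟩) hic
      · -- d i = false : quotient of locally finite is locally finite
        have : dQ i = false := by simp [hdQ, hd]
        rw [this]
        simp only [Bool.false_eq_true, if_false]
        have hlf : IsLocallyFiniteGroup (F i) := by simpa [hd] using hprop i
        exact locFin_of_surjective ψ hψsurj hlf
  · intro i
    by_cases hd : d i = true <;> by_cases hnt : Nontrivial ↥(A i) <;>
      simp [hdN, hdQ, hd, hnt]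

end Part4

section Part5

theorem goodSeries_count_invariant : ∀ (n : ℕ) (G : Type u) [Group G]
    (s : Fin (n+1) → Subgroup G) (c : Fin n → Bool), IsGoodSeries s c →
    ∀ (m : ℕ) (t : Fin (m+1) → Subgroup G) (d : Fin m → Bool), IsGoodSeries t d →
    bcount c = bcount d := by
  intro n
  induction n with
  | zero =>
    intro G _ s c hs m t d ht
    haveI h1 : Subsingleton G := by
      apply top_eq_bot_iff_subsingleton.mp
      rw [← hs.2.1, show (Fin.last 0) = 0 from rfl, hs.1]
    have hlf : IsLocallyFiniteGroup G := locFin_of_finite Finite.of_subsingleton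
    rw [goodSeries_locFin_count hlf hs, goodSeries_locFin_count hlf ht]
  | succ n ih =>
    intro G _ s c hs m t d ht
    obtain ⟨h0, htop, hfac⟩ := hs
    have hmono : ∀ i : Fin (n+1), s i.castSucc ≤ s i.succ := fun i => (hfac i).1
    have hmono' : Monotone s := chain_mono hmono
    choose F instF f hsurj hker hprop using fun i => (hfac i).2
    set ℓ : Fin (n+1) := Fin.last n with hℓ
    set N : Subgroup G := s ℓ.castSucc with hNdef
    -- N is the kernel of a hom to the top factor
    have htop' : s ℓ.succ = ⊤ := by
      rw [show ℓ.succ = Fin.last (n+1) from rfl]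
      exact htop
    set j : G →* ↥(s ℓ.succ) :=
      { toFun := fun x => ⟨x, htop' ▸ Subgroup.mem_top x⟩,
        map_one' := rfl, map_mul' := fun _ _ => rfl } with hj
    set fhat : G →* F ℓ := (f ℓ).comp j with hfhat
    have hfhatsurj : Function.Surjective fhat := by
      intro y
      obtain ⟨x, rfl⟩ := hsurj ℓ y
      exact ⟨(x : G), by rw [hfhat]; simp [hj]⟩
    have hfhatker : ∀ x : G, fhat x = 1 ↔ x ∈ N := fun x => hker ℓ (j x)
    have hNker : N = fhat.ker := by
      ext x
      rw [MonoidHom.mem_ker, hfhatker]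
    haveI hNnormal : N.Normal := by rw [hNker]; infer_instance
    have eF : (G ⧸ N) ≃* F ℓ :=
      (QuotientGroup.quotientMulEquivOfEq hNker).trans
        (QuotientGroup.quotientKerEquivOfSurjective fhat hfhatsurj)
    -- restricted series on N
    set s' : Fin (n+1) → Subgroup ↥N := fun k => (s k.castSucc).subgroupOf N with hs'
    set c' : Fin n → Bool := fun i => c i.castSucc with hc'
    have hs'good : IsGoodSeries s' c' := by
      refine ⟨?_, ?_, ?_⟩
      · show (s (0 : Fin (n+2))).subgroupOf N = ⊥
        rw [h0]; exact Subgroup.bot_subgroupOf N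
      · show (s ℓ.castSucc).subgroupOf N = ⊤
        exact Subgroup.subgroupOf_self N
      · intro i
        constructor
        · show (s i.castSucc.castSucc).subgroupOf N ≤ (s i.castSucc.succ).subgroupOf N
          exact Subgroup.comap_mono (hmono i.castSucc)
        · have hle : s i.castSucc.succ ≤ N := by
            apply hmono'
            rw [Fin.le_def]
            show i.val + 1 ≤ n
            exact i.isLt
          have hcoe' : ∀ y : ↥((s i.castSucc.succ).subgroupOf N),
              ((Subgroup.subgroupOfEquivOfLe hle y : ↥(s i.castSucc.succ)) : G)
                = ((y : ↥N) : G) := fun y => rfl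
          refine ⟨F i.castSucc, instF i.castSucc,
            ((f i.castSucc).comp (Subgroup.subgroupOfEquivOfLe hle).toMonoidHom :
              ↥((fun k => (s k.castSucc).subgroupOf N) i.succ) →* F i.castSucc), ?_, ?_, ?_⟩
          · exact (hsurj i.castSucc).comp (Subgroup.subgroupOfEquivOfLe hle).surjective
          · intro x
            show f i.castSucc (Subgroup.subgroupOfEquivOfLe hle x) = 1 ↔ _
            rw [hker i.castSucc (Subgroup.subgroupOfEquivOfLe hle x)]
            rw [hcoe' x]
            exact (Subgroup.mem_subgroupOf).symm
          · exact hprop i.castSucc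
    -- decompose t along N
    obtain ⟨dN, dQ, huN, hvQ, hcnt⟩ := goodSeries_decompose N ht
    -- count relations
    have hcount_t : bcount d = bcount dN + bcount dQ := by
      rw [bcount_eq_sum, bcount_eq_sum, bcount_eq_sum, ← Finset.sum_add_distrib]
      exact (Finset.sum_congr rfl (fun i _ => (hcnt i).symm))
    have hIH : bcount c' = bcount dN := ih ↥N s' c' hs'good m _ dN huN
    have hquot : bcount dQ = (if c ℓ then 1 else 0) := by
      by_cases hcl : c ℓ = true
      · have hic : IsInfiniteCyclic (F ℓ) := by simpa [hcl] using hprop ℓ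
        have hicQ : IsInfiniteCyclic (G ⧸ N) := infCyclic_of_mulEquiv eF.symm hic
        rw [hcl, if_pos rfl]
        exact goodSeries_infCyclic_count hicQ hvQ
      · have hlf : IsLocallyFiniteGroup (F ℓ) := by simpa [hcl] using hprop ℓ
        have hlfQ : IsLocallyFiniteGroup (G ⧸ N) :=
          locFin_of_injective eF.toMonoidHom eF.injective hlf
        rw [if_neg hcl]
        exact goodSeries_locFin_count hlfQ hvQ
    have hcount_s : bcount c = bcount c' + (if c ℓ then 1 else 0) := bcount_succ c
    rw [hcount_s, hcount_t, hIH, hquot]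

end Part5

section Part6

lemma hirschLength_eq_of_goodSeries {K : Type u} [Group K] {m : ℕ}
    {t : Fin (m+1) → Subgroup K} {d : Fin m → Bool} (h : IsGoodSeries t d) :
    hirschLength K = (bcount d : ℕ∞) := by
  apply le_antisymm
  · exact sInf_le ⟨m, t, d, h, rfl⟩
  · apply le_sInf
    rintro x ⟨m', t', d', h', rfl⟩
    have hinv := goodSeries_count_invariant m K t d h m' t' d' h'
    rw [show ((Finset.univ.filter fun i => d' i = true).card : ℕ∞) = (bcount d' : ℕ∞) from rfl,
      ← hinv]


/-- Given an elementary amenable group `G` with a subnormal series whose factors are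
infinite cyclic or locally finite, and generators `g i` of the infinite cyclic factors
modulo the previous term, the subgroup generated by the `g i` is finitely generated of
the same Hirsch length as `G`. -/
theorem stmt9 {G : Type u} [Group G] (hEA : ElementaryAmenable G) {n : ℕ}
    (s : Fin (n + 1) → Subgroup G) (c : Fin n → Bool) (hgood : IsGoodSeries s c)
    (g : Fin n → G)
    (hmem : ∀ i : Fin n, c i = true → g i ∈ s i.succ)
    (hgen : ∀ i : Fin n, c i = true →
      ∀ x ∈ s i.succ, ∃ k : ℤ, (g i ^ k)⁻¹ * x ∈ s i.castSucc) :
    (Subgroup.closure {x : G | ∃ i : Fin n, c i = true ∧ g i = x}).FG ∧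
      hirschLength ↥(Subgroup.closure {x : G | ∃ i : Fin n, c i = true ∧ g i = x}) =
        hirschLength G := by
  set H : Subgroup G := Subgroup.closure {x : G | ∃ i : Fin n, c i = true ∧ g i = x} with hH
  have h0 := hgood.1
  have htop := hgood.2.1
  have hmono : ∀ i : Fin n, s i.castSucc ≤ s i.succ := fun i => (hgood.2.2 i).1
  choose F instF f hsurj hker hprop using fun i => (hgood.2.2 i).2
  constructor
  · -- finitely generated
    apply (Subgroup.fg_iff H).mpr
    refine ⟨_, rfl, ?_⟩
    apply Set.Finite.subset (Set.finite_range g)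
    rintro x ⟨i, _, rfl⟩
    exact ⟨i, rfl⟩
  · -- equal Hirsch lengths
    have hwgood : IsGoodSeries (fun j : Fin (n+1) => (s j).subgroupOf H) c := by
      refine ⟨?_, ?_, ?_⟩
      · show (s 0).subgroupOf H = ⊥
        rw [h0]; exact Subgroup.bot_subgroupOf H
      · show (s (Fin.last n)).subgroupOf H = ⊤
        rw [htop]; exact Subgroup.top_subgroupOf H
      intro i
      constructor
      · show (s i.castSucc).subgroupOf H ≤ (s i.succ).subgroupOf H
        exact Subgroup.comap_mono (hmono i)
      by_cases hci : c i = true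
      · -- infinite cyclic factor: the inclusion hits everything
        refine ⟨F i, instF i, (f i).comp (inclSub (s i.succ) H), ?_, ?_, ?_⟩
        · -- surjectivity via the generator
          intro y
          obtain ⟨x, rfl⟩ := hsurj i y
          obtain ⟨k, hk⟩ := hgen i hci (x : G) x.2
          have hgH : g i ∈ H := Subgroup.subset_closure ⟨i, hci, rfl⟩
          set ghat : ↥((s i.succ).subgroupOf H) :=
            ⟨⟨g i, hgH⟩, Subgroup.mem_subgroupOf.mpr (hmem i hci)⟩ with hghat
          set gbar : ↥(s i.succ) := ⟨g i, hmem i hci⟩ with hgbar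
          have hincl : inclSub (s i.succ) H (ghat ^ k) = gbar ^ k := by
            rw [map_zpow]; rfl
          have h1 : f i ((gbar ^ k)⁻¹ * x) = 1 := by
            rw [hker]
            have hco : (((gbar ^ k)⁻¹ * x : ↥(s i.succ)) : G) = (g i ^ k)⁻¹ * (x : G) := by
              push_cast
              rfl
            rw [hco]
            exact hk
          rw [map_mul, map_inv] at h1
          have h2 : f i (gbar ^ k) = f i x := by
            have := inv_mul_eq_one.mp h1
            exact this
          exact ⟨ghat ^ k, by rw [MonoidHom.comp_apply, hincl, h2]⟩
        · intro x
          show f i (inclSub (s i.succ) H x) = 1 ↔ _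
          rw [hker i _, inclSub_coe]
          exact (Subgroup.mem_subgroupOf).symm
        · exact hprop i
      · -- locally finite factor: take the range
        refine ⟨↥((f i).comp (inclSub (s i.succ) H)).range, inferInstance,
          ((f i).comp (inclSub (s i.succ) H)).rangeRestrict,
          MonoidHom.rangeRestrict_surjective _, ?_, ?_⟩
        · intro x
          rw [Subtype.ext_iff]
          have hcoe : (((f i).comp (inclSub (s i.succ) H)).rangeRestrict x :
              F i) = f i (inclSub (s i.succ) H x) := rfl
          have hone : ((1 : ↥((f i).comp (inclSub (s i.succ) H)).range) : F i) = 1 := rfl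
          rw [hcoe, hone, hker i _, inclSub_coe]
          exact (Subgroup.mem_subgroupOf).symm
        · have hlf : IsLocallyFiniteGroup (F i) := by simpa [hci] using hprop i
          rw [if_neg hci]
          exact locFin_of_injective _ (Subgroup.subtype_injective _) hlf
    rw [hirschLength_eq_of_goodSeries hwgood, hirschLength_eq_of_goodSeries hgood]

end Part6
end

section
/- Let N be a nilpotent group, α an endomorphism of N inducing an integral endomorphism on N_ab, and let H be a subgroup of N with α(H) ⊆ H. Then the restriction of α to H induces an integral endomorphism on H_ab. -/
/-- An endomorphism of an abelian group (written multiplicatively) is integral if it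
satisfies a monic integer polynomial in the endomorphism ring. -/
def IsIntegralMulEnd {A : Type*} [CommGroup A] (f : A →* A) : Prop :=
  IsIntegral ℤ (show AddMonoid.End (Additive A) from MonoidHom.toAdditive f)



open Polynomial

lemma existsQ (p q : ℤ[X]) (hp : p.Monic) (hq : q.Monic) :
    ∃ Q : ℤ[X], Q.Monic ∧ ∃ a b : (ℤ[X])[X],
      aeval (C (X : ℤ[X]) * X : (ℤ[X])[X]) Q = a * C p + b * q.map C := by
  haveI : Module.Finite ℤ (AdjoinRoot p) :=
    Module.Finite.of_basis (AdjoinRoot.powerBasis' hp).basis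
  set R := AdjoinRoot p with hR
  set q2 : R[X] := q.map (algebraMap ℤ R) with hq2def
  have hq2 : q2.Monic := hq.map _
  haveI : Module.Finite R (AdjoinRoot q2) :=
    Module.Finite.of_basis (AdjoinRoot.powerBasis' hq2).basis
  haveI : Module.Finite ℤ (AdjoinRoot q2) := Module.Finite.trans R (AdjoinRoot q2)
  set t : AdjoinRoot q2 := AdjoinRoot.of q2 (AdjoinRoot.root p) * AdjoinRoot.root q2 with ht
  obtain ⟨Q, hQm, hQ0⟩ : IsIntegral ℤ t := IsIntegral.of_finite ℤ t
  refine ⟨Q, hQm, ?_⟩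
  set ψ : (ℤ[X])[X] →+* AdjoinRoot q2 :=
    (AdjoinRoot.mk q2).comp (Polynomial.mapRingHom (AdjoinRoot.mk p)) with hψ
  have hψF : ψ (aeval (C (X : ℤ[X]) * X) Q) = 0 := by
    rw [aeval_def, Polynomial.hom_eval₂]
    have h1 : ψ (C (X : ℤ[X]) * X) = t := by
      simp only [hψ, map_mul, RingHom.coe_comp, Function.comp_apply, coe_mapRingHom,
        Polynomial.map_C, Polynomial.map_X, AdjoinRoot.mk_X]
      rfl
    have h2 : ψ.comp (algebraMap ℤ ((ℤ[X])[X])) = algebraMap ℤ (AdjoinRoot q2) :=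
      Subsingleton.elim _ _
    rw [h1, h2]
    exact hQ0
  set F := aeval (C (X : ℤ[X]) * X) Q with hF
  have h3 : AdjoinRoot.mk q2 (F.map (AdjoinRoot.mk p)) = 0 := hψF
  rw [AdjoinRoot.mk_eq_zero] at h3
  obtain ⟨G, hG⟩ := h3
  obtain ⟨G', rfl⟩ := Polynomial.map_surjective _ AdjoinRoot.mk_surjective G
  have key : (F - q.map C * G').map (AdjoinRoot.mk p) = 0 := by
    rw [Polynomial.map_sub, Polynomial.map_mul, hG, Polynomial.map_map]
    have : (AdjoinRoot.mk p).comp (C : ℤ →+* ℤ[X]) = algebraMap ℤ R := Subsingleton.elim _ _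
    rw [this, ← hq2def]
    ring
  have hdvd : (C p) ∣ (F - q.map C * G') := by
    rw [Polynomial.C_dvd_iff_dvd_coeff]
    intro i
    have h4 := congrArg (fun W => Polynomial.coeff W i) key
    simp only [Polynomial.coeff_map, Polynomial.coeff_zero] at h4
    exact AdjoinRoot.mk_eq_zero.mp h4
  obtain ⟨a, ha⟩ := hdvd
  refine ⟨a, G', ?_⟩
  have hF2 : F = C p * a + q.map C * G' := by rw [← ha]; ring
  show F = _
  rw [hF2]; ring

open Polynomial

namespace Stmt18

def mEnd {A : Type*} [CommGroup A] (f : A →* A) : AddMonoid.End (Additive A) :=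
  MonoidHom.toAdditive f

def Eprod {G : Type*} [Group G] (f : G →* G) (r : ℤ[X]) (x : G) : G :=
  ((List.range (r.natDegree + 1)).map fun j => ((⇑f)^[j] x) ^ r.coeff j).prod

lemma iter_apply_comm {A B : Type*} [Group A] [Group B] (σ : A →* B) (f : A →* A) (g : B →* B)
    (h : ∀ x, σ (f x) = g (σ x)) : ∀ (j : ℕ) (x : A), σ ((⇑f)^[j] x) = (⇑g)^[j] (σ x) := by
  intro j
  induction j with
  | zero => intro x; simp
  | succ n ih =>
      intro x
      rw [Function.iterate_succ_apply, Function.iterate_succ_apply, ih, h]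

lemma iter_mem {G : Type*} [Group G] (f : G →* G) (S : Subgroup G) (hS : ∀ g ∈ S, f g ∈ S)
    {x : G} (hx : x ∈ S) : ∀ j : ℕ, (⇑f)^[j] x ∈ S := by
  intro j
  induction j with
  | zero => simpa using hx
  | succ n ih => rw [Function.iterate_succ_apply']; exact hS _ ih

lemma Eprod_comm {A B : Type*} [Group A] [Group B] (σ : A →* B) (f : A →* A) (g : B →* B)
    (h : ∀ x, σ (f x) = g (σ x)) (r : ℤ[X]) (x : A) :
    σ (Eprod f r x) = Eprod g r (σ x) := by
  unfold Eprod
  rw [map_list_prod, List.map_map]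
  have he : (⇑σ ∘ fun j => (⇑f)^[j] x ^ r.coeff j) = fun j => (⇑g)^[j] (σ x) ^ r.coeff j := by
    funext j
    simp only [Function.comp_apply, map_zpow, iter_apply_comm σ f g h]
  rw [he]

lemma Eprod_mem {G : Type*} [Group G] (f : G →* G) (S : Subgroup G) (hS : ∀ g ∈ S, f g ∈ S)
    (r : ℤ[X]) {x : G} (hx : x ∈ S) : Eprod f r x ∈ S := by
  apply Subgroup.list_prod_mem
  intro y hy
  obtain ⟨j, _, rfl⟩ := List.mem_map.mp hy
  exact Subgroup.zpow_mem S (iter_mem f S hS hx j) _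

lemma list_range_prod {M : Type*} [CommMonoid M] (n : ℕ) (f : ℕ → M) :
    ((List.range n).map f).prod = ∏ j ∈ Finset.range n, f j := by
  induction n with
  | zero => simp
  | succ n ih => rw [List.range_succ, List.map_append, List.prod_append,
      Finset.prod_range_succ, ih]; simp

lemma Eprod_eq_prod {A : Type*} [CommGroup A] (f : A →* A) (r : ℤ[X]) (x : A) :
    Eprod f r x = ∏ j ∈ Finset.range (r.natDegree + 1), ((⇑f)^[j] x) ^ r.coeff j :=
  list_range_prod _ _

lemma ofMul_prod_zpow {A : Type*} [CommGroup A] (s : Finset ℕ) (g : ℕ → A) (c : ℕ → ℤ) :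
    Additive.ofMul (∏ j ∈ s, g j ^ c j) = ∑ j ∈ s, c j • Additive.ofMul (g j) := by
  classical
  induction s using Finset.induction with
  | empty => simp
  | insert _ _ hj ih => rw [Finset.prod_insert hj, Finset.sum_insert hj, ofMul_mul, ofMul_zpow, ih]

lemma end_pow_apply {A : Type*} [CommGroup A] (f : A →* A) (k : ℕ) (x : A) :
    ((mEnd f) ^ k) (Additive.ofMul x)
      = Additive.ofMul ((⇑f)^[k] x) := by
  induction k with
  | zero => rfl
  | succ n ih =>
      rw [pow_succ', Function.iterate_succ_apply']
      show (mEnd f) ((mEnd f ^ n) (Additive.ofMul x)) = _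
      rw [ih]
      rfl

lemma aeval_end_apply {A : Type*} [CommGroup A] (f : A →* A) (r : ℤ[X]) (x : A) :
    (Polynomial.aeval (mEnd f) r)
      (Additive.ofMul x) = Additive.ofMul (Eprod f r x) := by
  rw [Eprod_eq_prod, ofMul_prod_zpow, aeval_def, eval₂_eq_sum]
  rw [Polynomial.sum_over_range' (n := r.natDegree + 1) _ (by intro n; simp) (Nat.lt_succ_self _)]
  refine (AddMonoidHom.finset_sum_apply _ _ _).trans ?_
  apply Finset.sum_congr rfl
  intro k _
  show ((algebraMap ℤ (AddMonoid.End (Additive A))) (r.coeff k)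
      * (mEnd f) ^ k) (Additive.ofMul x) = _
  rw [show ∀ (a b : AddMonoid.End (Additive A)) y, (a * b) y = a (b y) from fun _ _ _ => rfl]
  rw [end_pow_apply, algebraMap_int_eq, eq_intCast, AddMonoid.End.intCast_apply]

end Stmt18

open Polynomial

namespace Stmt18

variable {M : Type*} [AddCommGroup M]

def Lsum (m : ℕ → M) (r : ℤ[X]) : M := r.sum fun j z => z • m j

lemma Lsum_zero (m : ℕ → M) : Lsum m 0 = 0 := Polynomial.sum_zero_index _

lemma Lsum_add (m : ℕ → M) (r s : ℤ[X]) : Lsum m (r + s) = Lsum m r + Lsum m s :=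
  Polynomial.sum_add_index _ _ _ (fun n => zero_smul ℤ (m n)) (fun n a b => add_smul a b (m n))

lemma Lsum_monomial (m : ℕ → M) (a : ℕ) (z : ℤ) : Lsum m (monomial a z) = z • m a :=
  Polynomial.sum_monomial_index _ _ (zero_smul ℤ (m a))

lemma Lsum_smul (m : ℕ → M) (z : ℤ) (r : ℤ[X]) : Lsum m (z • r) = z • Lsum m r := by
  unfold Lsum
  rw [Polynomial.sum_smul_index' r z _ (fun n => zero_smul ℤ (m n)), Polynomial.sum_def,
    Polynomial.sum_def, Finset.smul_sum]
  exact Finset.sum_congr rfl fun j _ => by rw [smul_eq_mul, mul_smul]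

lemma Lsum_X_pow_mul (m : ℕ → M) (a : ℕ) (r : ℤ[X]) :
    Lsum m (X ^ a * r) = Lsum (fun j => m (j + a)) r := by
  induction r using Polynomial.induction_on' with
  | add p q hp hq => rw [mul_add, Lsum_add, Lsum_add, hp, hq]
  | monomial n z => rw [X_pow_mul_monomial, Lsum_monomial, Lsum_monomial]

lemma Lsum_mul_left (m : ℕ → M) (p : ℤ[X]) (h : ∀ a, Lsum m (X ^ a * p) = 0) :
    ∀ g : ℤ[X], Lsum m (g * p) = 0 := by
  intro g
  induction g using Polynomial.induction_on' with
  | add u v hu hv => rw [add_mul, Lsum_add, hu, hv, add_zero]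
  | monomial n z =>
      have : (monomial n z : ℤ[X]) * p = z • (X ^ n * p) := by
        rw [← smul_mul_assoc]
        congr 1
        rw [Polynomial.smul_eq_C_mul, X_pow_eq_monomial, C_mul_monomial, mul_one]
      rw [this, Lsum_smul, h n, smul_zero]

lemma Lsum_eq_range (m : ℕ → M) (r : ℤ[X]) :
    Lsum m r = ∑ j ∈ Finset.range (r.natDegree + 1), r.coeff j • m j :=
  Polynomial.sum_over_range' _ (fun n => zero_smul ℤ (m n)) _ (Nat.lt_succ_self _)

/-- Bilinear sum over a polynomial in two variables (inner variable: `a`-index,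
outer variable: `b`-index). -/
noncomputable def Bsum (m : ℕ → ℕ → M) (F : (ℤ[X])[X]) : M := F.sum fun b fb => Lsum (fun a => m a b) fb

lemma Bsum_add (m : ℕ → ℕ → M) (F G : (ℤ[X])[X]) :
    Bsum m (F + G) = Bsum m F + Bsum m G :=
  Polynomial.sum_add_index _ _ _ (fun n => Lsum_zero _) (fun n a b => Lsum_add _ a b)

lemma Bsum_monomial (m : ℕ → ℕ → M) (b : ℕ) (g : ℤ[X]) :
    Bsum m (monomial b g) = Lsum (fun a => m a b) g :=
  Polynomial.sum_monomial_index _ _ (Lsum_zero _)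

lemma Bsum_smul (m : ℕ → ℕ → M) (z : ℤ) (F : (ℤ[X])[X]) :
    Bsum m (z • F) = z • Bsum m F := by
  unfold Bsum
  rw [Polynomial.sum_smul_index' F z _ (fun n => Lsum_zero _), Polynomial.sum_def,
    Polynomial.sum_def, Finset.smul_sum]
  exact Finset.sum_congr rfl fun j _ => Lsum_smul _ z _

lemma Bsum_mul_left (m : ℕ → ℕ → M) (W : (ℤ[X])[X])
    (h : ∀ a b, Bsum m (monomial b (X ^ a) * W) = 0) :
    ∀ A : (ℤ[X])[X], Bsum m (A * W) = 0 := by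
  intro A
  induction A using Polynomial.induction_on' with
  | add u v hu hv => rw [add_mul, Bsum_add, hu, hv, add_zero]
  | monomial b g =>
      induction g using Polynomial.induction_on' with
      | add u v hu hv =>
          rw [map_add, add_mul, Bsum_add, hu, hv, add_zero]
      | monomial a z =>
          have : (monomial b (monomial a z) : (ℤ[X])[X]) * W
              = z • ((monomial b (X ^ a) : (ℤ[X])[X]) * W) := by
            rw [← smul_mul_assoc]
            congr 1
            rw [Polynomial.smul_monomial]
            congr 1
            rw [Polynomial.smul_eq_C_mul, X_pow_eq_monomial, C_mul_monomial, mul_one]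
          rw [this, Bsum_smul, h a b, smul_zero]

lemma Bsum_X_pow_mul (m : ℕ → ℕ → M) (b₀ : ℕ) (F : (ℤ[X])[X]) :
    Bsum m (X ^ b₀ * F) = Bsum (fun a b => m a (b + b₀)) F := by
  induction F using Polynomial.induction_on' with
  | add p q hp hq => rw [mul_add, Bsum_add, Bsum_add, hp, hq]
  | monomial n g => rw [X_pow_mul_monomial, Bsum_monomial, Bsum_monomial]

lemma Bsum_C_X_pow_mul (m : ℕ → ℕ → M) (a₀ : ℕ) (F : (ℤ[X])[X]) :
    Bsum m (C (X ^ a₀) * F) = Bsum (fun a b => m (a + a₀) b) F := by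
  induction F using Polynomial.induction_on' with
  | add p q hp hq => rw [mul_add, Bsum_add, Bsum_add, hp, hq]
  | monomial n g =>
      rw [C_mul_monomial, Bsum_monomial, Bsum_monomial, Lsum_X_pow_mul]

lemma Bsum_map_C (m : ℕ → ℕ → M) (q : ℤ[X]) :
    Bsum m (q.map C) = Lsum (fun b => m 0 b) q := by
  induction q using Polynomial.induction_on' with
  | add p q hp hq => rw [Polynomial.map_add, Bsum_add, Lsum_add, hp, hq]
  | monomial n z =>
      rw [Polynomial.map_monomial, Bsum_monomial, Lsum_monomial, ← Polynomial.monomial_zero_left,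
        Lsum_monomial]

lemma Bsum_diag (m : ℕ → ℕ → M) (Q : ℤ[X]) :
    Bsum m (aeval (C (X : ℤ[X]) * X : (ℤ[X])[X]) Q) = Lsum (fun k => m k k) Q := by
  induction Q using Polynomial.induction_on' with
  | add p q hp hq => rw [map_add, Bsum_add, Lsum_add, hp, hq]
  | monomial k z =>
      have h1 : (aeval (C (X : ℤ[X]) * X : (ℤ[X])[X])) (monomial k z)
          = monomial k ((z : ℤ[X]) * X ^ k) := by
        rw [aeval_monomial, mul_pow, ← C_pow, eq_intCast, ← mul_assoc]
        rw [show ((z : (ℤ[X])[X])) = C ((z : ℤ[X])) by rw [← Polynomial.C_eq_intCast z], ← C_mul,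
          C_mul_X_pow_eq_monomial]
      rw [h1, Bsum_monomial, Lsum_monomial]
      have h2 : ((z : ℤ[X])) * X ^ k = z • (X ^ k : ℤ[X]) := by
        rw [Polynomial.smul_eq_C_mul, ← Polynomial.C_eq_intCast z, Int.cast_id]
      rw [h2, Lsum_smul, X_pow_eq_monomial, Lsum_monomial, one_smul]

end Stmt18


open Polynomial
open scoped commutatorElement IsMulCommutative

namespace Stmt18

variable {N : Type*} [Group N]

lemma lcs_invariant (α : N →* N) (n : ℕ) {g : N} (hg : g ∈ (⊤ : Subgroup N).lowerCentralSeries n) :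
    α g ∈ (⊤ : Subgroup N).lowerCentralSeries n :=
  lowerCentralSeries.map α n (Subgroup.mem_map_of_mem α hg)

lemma Eprod_one {G : Type*} [Group G] (f : G →* G) (r : ℤ[X]) : Eprod f r 1 = 1 := by
  apply List.prod_eq_one
  intro x hx
  obtain ⟨j, _, rfl⟩ := List.mem_map.mp hx
  rw [iterate_map_one, one_zpow]

lemma iterate_map_commutatorElement {G : Type*} [Group G] (f : G →* G) (k : ℕ) (a b : G) :
    (⇑f)^[k] ⁅a, b⁆ = ⁅(⇑f)^[k] a, (⇑f)^[k] b⁆ := by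
  induction k with
  | zero => rfl
  | succ n ih => simp only [Function.iterate_succ_apply', ih, map_commutatorElement]

lemma ofMul_chi_Eprod {G A : Type*} [Group G] [CommGroup A] (χ : G →* A) (f : G →* G)
    (r : ℤ[X]) (x : G) :
    Lsum (fun j => Additive.ofMul (χ ((⇑f)^[j] x))) r = Additive.ofMul (χ (Eprod f r x)) := by
  rw [Lsum_eq_range]
  unfold Eprod
  rw [map_list_prod, List.map_map]
  rw [show ⇑χ ∘ (fun j => ((⇑f)^[j] x) ^ r.coeff j) = fun j => (χ ((⇑f)^[j] x)) ^ r.coeff j from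
    funext fun j => map_zpow χ _ _]
  rw [list_range_prod, ofMul_prod_zpow]

lemma Eprod_mul' {G : Type*} [Group G] (h : ∀ a b : G, a * b = b * a) (f : G →* G)
    (r : ℤ[X]) (x y : G) : Eprod f r (x * y) = Eprod f r x * Eprod f r y := by
  have key : ∀ a b c d : G, a * b * (c * d) = a * c * (b * d) := fun a b c d => by
    rw [mul_assoc, ← mul_assoc b c d, h b c, mul_assoc, ← mul_assoc]
  unfold Eprod
  generalize (r.natDegree + 1) = n
  induction n with
  | zero => simp
  | succ n ih =>
      rw [List.range_succ]
      simp only [List.map_append, List.prod_append, List.map_singleton, List.prod_singleton]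
      rw [ih, iterate_map_mul, Commute.mul_zpow (h _ _), key]

lemma key_step (α : N →* N) (p : ℤ[X]) (hpm : p.Monic)
    (hp : ∀ g : N, Eprod α p g ∈ (⊤ : Subgroup N).lowerCentralSeries 1)
    (i : ℕ) (q : ℤ[X]) (hqm : q.Monic)
    (hq : ∀ g ∈ (⊤ : Subgroup N).lowerCentralSeries i, Eprod α q g ∈ (⊤ : Subgroup N).lowerCentralSeries (i + 1)) :
    ∃ Q : ℤ[X], Q.Monic ∧
      ∀ g ∈ (⊤ : Subgroup N).lowerCentralSeries (i + 1), Eprod α Q g ∈ (⊤ : Subgroup N).lowerCentralSeries (i + 2) := by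
  obtain ⟨Q, hQm, A', B', hQeq⟩ := existsQ p q hpm hqm
  refine ⟨Q, hQm, ?_⟩
  set K : Subgroup N := (⊤ : Subgroup N).lowerCentralSeries (i + 2) with hK
  let π : N →* N ⧸ K := QuotientGroup.mk' K
  have hπsurj : Function.Surjective π := QuotientGroup.mk'_surjective K
  have hcomap : K ≤ Subgroup.comap α K := fun g hg => lcs_invariant α _ hg
  let β : N ⧸ K →* N ⧸ K := QuotientGroup.map K K α hcomap
  have hcommβ : ∀ x, π (α x) = β (π x) := fun x => rfl
  let A : ℕ → Subgroup (N ⧸ K) := fun j => Subgroup.map π ((⊤ : Subgroup N).lowerCentralSeries j)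
  have hAsucc : ∀ j, A (j + 1) = ⁅A j, ⊤⁆ := by
    intro j
    show Subgroup.map π ⁅(⊤ : Subgroup N).lowerCentralSeries j, ⊤⁆ = _
    rw [Subgroup.map_commutator, Subgroup.map_top_of_surjective _ hπsurj]
  have hAbot : A (i + 2) = ⊥ := by
    rw [show A (i+2) = Subgroup.map π K from rfl, Subgroup.map_eq_bot_iff, QuotientGroup.ker_mk']
  have hAβ : ∀ j x, x ∈ A j → β x ∈ A j := by
    intro j x hx
    obtain ⟨g, hg, rfl⟩ := hx
    exact ⟨α g, lcs_invariant α _ hg, (hcommβ g).symm⟩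
  have hWcent : ∀ z ∈ A (i + 1), ∀ g : N ⧸ K, z * g = g * z := by
    intro z hz g
    have hm : ⁅z, g⁆ ∈ A (i + 2) := by
      rw [hAsucc]
      exact Subgroup.commutator_mem_commutator hz (Subgroup.mem_top g)
    rw [hAbot, Subgroup.mem_bot] at hm
    exact commutatorElement_eq_one_iff_mul_comm.mp hm
  have hA0 : A 0 = ⊤ := by
    show Subgroup.map π ((⊤ : Subgroup N).lowerCentralSeries 0) = ⊤
    rw [lowerCentralSeries_zero, Subgroup.map_top_of_surjective _ hπsurj]
  have hAiA1 : ⁅A i, A 1⁆ = ⊥ := by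
    have h1 : ⁅⁅A i, (⊤ : Subgroup (N ⧸ K))⁆, (⊤ : Subgroup (N ⧸ K))⁆ = ⊥ := by
      rw [← hAsucc, ← hAsucc, hAbot]
    have h2 : ⁅⁅(⊤ : Subgroup (N ⧸ K)), A i⁆, (⊤ : Subgroup (N ⧸ K))⁆ = ⊥ := by
      rw [Subgroup.commutator_comm (⊤ : Subgroup (N ⧸ K)) (A i)]
      exact h1
    have h3 : ⁅⁅(⊤ : Subgroup (N ⧸ K)), (⊤ : Subgroup (N ⧸ K))⁆, A i⁆ = ⊥ :=
      Subgroup.commutator_commutator_eq_bot_of_rotate h2 h1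
    rw [hAsucc 0, hA0, Subgroup.commutator_comm]
    exact h3
  -- the commutative subgroup W
  set W : Subgroup (N ⧸ K) := A (i + 1) with hWdef
  haveI hWc : IsMulCommutative ↥W := ⟨⟨fun a b => Subtype.ext (hWcent a.1 a.2 b.1)⟩⟩
  let βW : ↥W →* ↥W := (β.domRestrict W).codRestrict W (fun x => hAβ (i + 1) x.1 x.2)
  have hβWval : ∀ x : ↥W, (W.subtype (βW x)) = β (W.subtype x) := fun x => rfl
  let βV : ↥(A i) →* ↥(A i) := (β.domRestrict (A i)).codRestrict (A i) (fun x => hAβ i x.1 x.2)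
  have hβVval : ∀ x : ↥(A i), ((A i).subtype (βV x)) = β ((A i).subtype x) := fun x => rfl
  -- the evaluation hom on W
  let EW : ↥W →* ↥W :=
    { toFun := fun w => Eprod βW Q w
      map_one' := Eprod_one βW Q
      map_mul' := fun x y =>
        Eprod_mul' (fun a b => Subtype.ext (hWcent a.1 a.2 b.1)) βW Q x y }
  -- main generator computation
  have hgen : ⁅A i, (⊤ : Subgroup (N ⧸ K))⁆ ≤ Subgroup.map W.subtype EW.ker := by
    rw [Subgroup.commutator_le]
    intro v hv t _
    have hw0 : ⁅v, t⁆ ∈ W := by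
      rw [hWdef, hAsucc i]
      exact Subgroup.commutator_mem_commutator hv (Subgroup.mem_top t)
    refine ⟨⟨⁅v, t⁆, hw0⟩, ?_, rfl⟩
    refine MonoidHom.mem_ker.mpr ?_
    show Eprod βW Q ⟨⁅v, t⁆, hw0⟩ = 1
    -- memberships of iterates
    have hvmem : ∀ b : ℕ, (⇑β)^[b] v ∈ A i := fun b => iter_mem β (A i) (hAβ i) hv b
    have hmW : ∀ a b : ℕ, ⁅(⇑β)^[b] v, (⇑β)^[a] t⁆ ∈ W := by
      intro a b
      rw [hWdef, hAsucc i]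
      exact Subgroup.commutator_mem_commutator (hvmem b) (Subgroup.mem_top _)
    set m : ℕ → ℕ → Additive ↥W :=
      fun a b => Additive.ofMul (⟨⁅(⇑β)^[b] v, (⇑β)^[a] t⁆, hmW a b⟩ : ↥W) with hmdef
    -- commutator homs
    have hcentW : ∀ w ∈ W, ∀ g : N ⧸ K, w * g = g * w := fun w hw => hWcent w hw
    have comm_right : ∀ (u : N ⧸ K), u ∈ A i → ∀ g h : N ⧸ K, ⁅u, g * h⁆ = ⁅u, g⁆ * ⁅u, h⁆ := by
      intro u hu g h
      have hc : ⁅u, h⁆ ∈ W := by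
        rw [hWdef, hAsucc i]; exact Subgroup.commutator_mem_commutator hu (Subgroup.mem_top h)
      have e1 : ⁅u, g * h⁆ = ⁅u, g⁆ * (g * ⁅u, h⁆ * g⁻¹) := by group
      rw [e1, ← hcentW _ hc g, mul_inv_cancel_right]
    have comm_left : ∀ (u : N ⧸ K) (g h : N ⧸ K), g ∈ A i → h ∈ A i →
        ⁅g * h, u⁆ = ⁅g, u⁆ * ⁅h, u⁆ := by
      intro u g h hg hh
      have hc : ⁅h, u⁆ ∈ W := by
        rw [hWdef, hAsucc i]; exact Subgroup.commutator_mem_commutator hh (Subgroup.mem_top u)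
      have hc2 : ⁅g, u⁆ ∈ W := by
        rw [hWdef, hAsucc i]; exact Subgroup.commutator_mem_commutator hg (Subgroup.mem_top u)
      have e1 : ⁅g * h, u⁆ = (g * ⁅h, u⁆ * g⁻¹) * ⁅g, u⁆ := by group
      rw [e1, ← hcentW _ hc g, mul_inv_cancel_right, hcentW _ hc]
    -- χR : right-slot commutator hom for fixed u ∈ A i
    have hχRmem : ∀ (u : N ⧸ K), u ∈ A i → ∀ g : N ⧸ K, ⁅u, g⁆ ∈ W := by
      intro u hu g
      rw [hWdef, hAsucc i]; exact Subgroup.commutator_mem_commutator hu (Subgroup.mem_top g)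
    -- core identity (E1): diagonal gives Eprod
    have hw0' : (⟨⁅v, t⁆, hw0⟩ : ↥W) = ⟨⁅v, t⁆, hw0⟩ := rfl
    have hdiag : Bsum m (aeval (C (X : ℤ[X]) * X : (ℤ[X])[X]) Q)
        = Additive.ofMul (Eprod βW Q ⟨⁅v, t⁆, hw0⟩) := by
      rw [Bsum_diag]
      have hk : ∀ k, m k k = Additive.ofMul ((⇑βW)^[k] (⟨⁅v, t⁆, hw0⟩ : ↥W)) := by
        intro k
        rw [hmdef]
        congr 1
        apply Subtype.ext
        show ⁅(⇑β)^[k] v, (⇑β)^[k] t⁆ = W.subtype ((⇑βW)^[k] ⟨⁅v, t⁆, hw0⟩)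
        rw [iter_apply_comm W.subtype βW β hβWval, Subgroup.coe_subtype]
        show _ = (⇑β)^[k] ⁅v, t⁆
        rw [iterate_map_commutatorElement]
      rw [show (fun k => m k k) = fun k => Additive.ofMul ((⇑βW)^[k] (⟨⁅v,t⁆, hw0⟩ : ↥W)) from
        funext hk]
      exact ofMul_chi_Eprod (MonoidHom.id ↥W) βW Q _
    -- (E2): p-side vanishing
    have hpside : ∀ a b : ℕ, Bsum m ((monomial b (X ^ a) : (ℤ[X])[X]) * C p) = 0 := by
      intro a b
      have e1 : (monomial b (X ^ a) : (ℤ[X])[X]) * C p = monomial b (X ^ a * p) := by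
        rw [mul_comm, C_mul_monomial, mul_comm]
      rw [e1, Bsum_monomial, Lsum_X_pow_mul]
      set u : N ⧸ K := (⇑β)^[b] v with hudef
      have hu : u ∈ A i := hvmem b
      let χR : N ⧸ K →* ↥W :=
        { toFun := fun g => ⟨⁅u, g⁆, hχRmem u hu g⟩
          map_one' := Subtype.ext (commutatorElement_one_right u)
          map_mul' := fun g h => Subtype.ext (comm_right u hu g h) }
      have hmre : (fun j => m (j + a) b) = fun j => Additive.ofMul (χR ((⇑β)^[j] ((⇑β)^[a] t))) := by
        funext j
        rw [hmdef]
        congr 1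
        apply Subtype.ext
        show ⁅(⇑β)^[b] v, (⇑β)^[j + a] t⁆ = ⁅u, (⇑β)^[j] ((⇑β)^[a] t)⁆
        rw [hudef, Function.iterate_add_apply]
      rw [hmre, ofMul_chi_Eprod χR β p ((⇑β)^[a] t)]
      obtain ⟨x, rfl⟩ := hπsurj t
      have hEp : Eprod β p ((⇑β)^[a] (π x)) ∈ A 1 := by
        have h1 : (⇑β)^[a] (π x) = π ((⇑α)^[a] x) := (iter_apply_comm π α β hcommβ a x).symm
        rw [h1, ← Eprod_comm π α β hcommβ]
        exact ⟨_, hp ((⇑α)^[a] x), rfl⟩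
      have : χR (Eprod β p ((⇑β)^[a] (π x))) = 1 := by
        apply Subtype.ext
        show ⁅u, Eprod β p ((⇑β)^[a] (π x))⁆ = 1
        have : ⁅u, Eprod β p ((⇑β)^[a] (π x))⁆ ∈ (⊥ : Subgroup (N ⧸ K)) := by
          rw [← hAiA1]
          exact Subgroup.commutator_mem_commutator hu hEp
        rwa [Subgroup.mem_bot] at this
      rw [this]
      rfl
    -- (E3): q-side vanishing
    have hqside : ∀ a b : ℕ, Bsum m ((monomial b (X ^ a) : (ℤ[X])[X]) * (q.map C)) = 0 := by
      intro a b
      have e1 : (monomial b (X ^ a) : (ℤ[X])[X]) * (q.map C)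
          = C ((X : ℤ[X]) ^ a) * ((X : (ℤ[X])[X]) ^ b * q.map C) := by
        rw [← mul_assoc, ← C_mul_X_pow_eq_monomial]
      rw [e1, Bsum_C_X_pow_mul, Bsum_X_pow_mul, Bsum_map_C]
      set u : N ⧸ K := (⇑β)^[a] t with hudef
      have hv2 : (⇑β)^[b] v ∈ A i := hvmem b
      let χL : ↥(A i) →* ↥W :=
        { toFun := fun z => ⟨⁅(z : N ⧸ K), u⁆, by
            rw [hWdef, hAsucc i]
            exact Subgroup.commutator_mem_commutator z.2 (Subgroup.mem_top u)⟩
          map_one' := Subtype.ext (by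
            show ⁅((1 : ↥(A i)) : N ⧸ K), u⁆ = 1
            rw [Subgroup.coe_one]
            exact commutatorElement_one_left u)
          map_mul' := fun g h => Subtype.ext (comm_left u g.1 h.1 g.2 h.2) }
      have hmre : (fun b' => m (0 + a) (b' + b))
          = fun b' => Additive.ofMul (χL ((⇑βV)^[b'] ⟨(⇑β)^[b] v, hv2⟩)) := by
        funext b'
        rw [hmdef]
        congr 1
        apply Subtype.ext
        show ⁅(⇑β)^[b' + b] v, (⇑β)^[0 + a] t⁆ = ⁅((A i).subtype ((⇑βV)^[b'] ⟨(⇑β)^[b] v, hv2⟩)), u⁆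
        rw [iter_apply_comm (A i).subtype βV β hβVval, Subgroup.coe_subtype]
        show ⁅(⇑β)^[b' + b] v, (⇑β)^[0 + a] t⁆ = ⁅(⇑β)^[b'] ((⇑β)^[b] v), u⁆
        rw [hudef, Function.iterate_add_apply, Nat.zero_add]
      rw [hmre, ofMul_chi_Eprod χL βV q ⟨(⇑β)^[b] v, hv2⟩]
      -- the inner Eprod lies in W, hence is central, hence commutator vanishes
      obtain ⟨y, hy, hyv⟩ := hv
      have hval : ((Eprod βV q ⟨(⇑β)^[b] v, hv2⟩ : ↥(A i)) : N ⧸ K) ∈ W := by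
        have h1 : ((Eprod βV q ⟨(⇑β)^[b] v, hv2⟩ : ↥(A i)) : N ⧸ K)
            = Eprod β q ((⇑β)^[b] v) := by
          rw [← Subgroup.coe_subtype, Eprod_comm (A i).subtype βV β hβVval]
          rfl
        have h2 : (⇑β)^[b] v = π ((⇑α)^[b] y) := by
          rw [← hyv]
          exact (iter_apply_comm π α β hcommβ b y).symm
        rw [h1, h2, ← Eprod_comm π α β hcommβ]
        have h3 : (⇑α)^[b] y ∈ (⊤ : Subgroup N).lowerCentralSeries i :=
          iter_mem α ((⊤ : Subgroup N).lowerCentralSeries i) (fun g hg => lcs_invariant α i hg) hy b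
        exact ⟨_, hq _ h3, rfl⟩
      have : χL (Eprod βV q ⟨(⇑β)^[b] v, hv2⟩) = 1 := by
        apply Subtype.ext
        show ⁅((Eprod βV q ⟨(⇑β)^[b] v, hv2⟩ : ↥(A i)) : N ⧸ K), u⁆ = 1
        rw [commutatorElement_eq_one_iff_mul_comm]
        exact hcentW _ hval u
      rw [this]
      rfl
    -- combine
    have hzero : Bsum m (aeval (C (X : ℤ[X]) * X : (ℤ[X])[X]) Q) = 0 := by
      rw [hQeq, Bsum_add, Bsum_mul_left m (C p) hpside A', Bsum_mul_left m (q.map C) hqside B',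
        add_zero]
    rw [hzero] at hdiag
    exact (ofMul_eq_zero.mp hdiag.symm)
  -- conclude
  intro g hg
  have hπg : π g ∈ W := ⟨g, hg, rfl⟩
  have hgS : π g ∈ Subgroup.map W.subtype EW.ker := by
    apply hgen
    rw [← hAsucc i, ← hWdef]
    exact hπg
  obtain ⟨w, hw, hwval⟩ := hgS
  have hker : Eprod βW Q w = 1 := MonoidHom.mem_ker.mp hw
  have h1 : Eprod β Q (π g) = 1 := by
    rw [← hwval]
    calc Eprod β Q (W.subtype w) = W.subtype (Eprod βW Q w) :=
          (Eprod_comm W.subtype βW β hβWval Q w).symm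
      _ = 1 := by rw [hker, map_one]
  have h2 : π (Eprod α Q g) = 1 := by
    rw [Eprod_comm π α β hcommβ]
    exact h1
  have h3 : Eprod α Q g ∈ MonoidHom.ker π := MonoidHom.mem_ker.mpr h2
  rwa [QuotientGroup.ker_mk'] at h3

end Stmt18

namespace Stmt18

lemma of_intertwine {G : Type*} [Group G] (φ : G →* G) (x : G) :
    Abelianization.of (φ x) = Abelianization.map φ (Abelianization.of x) :=
  (Abelianization.map_of φ x).symm

end Stmt18

open Stmt18 Polynomial

/-- If `α` is an endomorphism of a nilpotent group `N` inducing an integral endomorphism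
on `N_ab`, and `H ≤ N` satisfies `α(H) ⊆ H`, then the restriction of `α` to `H` induces
an integral endomorphism on `H_ab`. -/
theorem stmt18 {N : Type*} [Group N] [Group.IsNilpotent N] (α : N →* N)
    (hint : IsIntegralMulEnd (Abelianization.map α))
    (H : Subgroup N) (hH : ∀ g ∈ H, α g ∈ H) :
    IsIntegralMulEnd (Abelianization.map
      (MonoidHom.codRestrict (α.domRestrict H) H (fun x => hH x.1 x.2))) := by
  obtain ⟨p, hpm, hp0⟩ := hint
  -- transfer hypothesis to elementwise form
  have hp0' : Polynomial.aeval (mEnd (Abelianization.map α)) p = 0 := by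
    rw [aeval_def]; exact hp0
  have hp : ∀ g : N, Eprod α p g ∈ (⊤ : Subgroup N).lowerCentralSeries 1 := by
    intro g
    have h1 : (Polynomial.aeval (mEnd (Abelianization.map α)) p)
        (Additive.ofMul (Abelianization.of g)) = 0 := by rw [hp0']; rfl
    rw [aeval_end_apply] at h1
    have h2 : Eprod (Abelianization.map α) p (Abelianization.of g) = 1 := ofMul_eq_zero.mp h1
    rw [← Eprod_comm Abelianization.of α (Abelianization.map α)
      (fun x => of_intertwine α x) p g] at h2
    show Eprod α p g ∈ commutator N
    exact (QuotientGroup.eq_one_iff _).mp h2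
  -- chain of polynomials
  have hchain : ∀ i, ∃ q : ℤ[X], q.Monic ∧
      ∀ g ∈ (⊤ : Subgroup N).lowerCentralSeries i, Eprod α q g ∈ (⊤ : Subgroup N).lowerCentralSeries (i + 1) := by
    intro i
    induction i with
    | zero => exact ⟨p, hpm, fun g _ => hp g⟩
    | succ n ih =>
        obtain ⟨q, hqm, hq⟩ := ih
        exact key_step α p hpm hp n q hqm hq
  choose qs hqsm hqs using hchain
  obtain ⟨c, hc⟩ := nilpotent_iff_lowerCentralSeries.mp ‹Group.IsNilpotent N›
  -- the restricted map
  set β : ↥H →* ↥H := MonoidHom.codRestrict (α.domRestrict H) H (fun x => hH x.1 x.2) with hβ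
  have hβval : ∀ x : ↥H, H.subtype (β x) = α (H.subtype x) := fun x => rfl
  set f2 : Abelianization ↥H →* Abelianization ↥H := Abelianization.map β with hf2
  -- iterated polynomial
  let R : ℕ → ℤ[X] := fun k => Nat.rec 1 (fun n r => qs n * r) k
  have hR0 : R 0 = 1 := rfl
  have hRsucc : ∀ k, R (k + 1) = qs k * R k := fun k => rfl
  have hRm : ∀ k, (R k).Monic := by
    intro k
    induction k with
    | zero => exact monic_one
    | succ n ih => rw [hRsucc]; exact (hqsm n).mul ih
  -- main induction
  have main : ∀ (k : ℕ) (h : ↥H), ∃ h' : ↥H, (↑h' : N) ∈ (⊤ : Subgroup N).lowerCentralSeries k ∧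
      (Polynomial.aeval (mEnd f2) (R k)) (Additive.ofMul (Abelianization.of h))
        = Additive.ofMul (Abelianization.of h') := by
    intro k
    induction k with
    | zero =>
        intro h
        refine ⟨h, Subgroup.mem_top _, ?_⟩
        rw [hR0, map_one]
        rfl
    | succ n ih =>
        intro h
        obtain ⟨h', hmem, heval⟩ := ih h
        refine ⟨Eprod β (qs n) h', ?_, ?_⟩
        · have h1 : (↑(Eprod β (qs n) h') : N) = Eprod α (qs n) (↑h' : N) := by
            rw [← Subgroup.coe_subtype, Eprod_comm H.subtype β α hβval]
          rw [h1]
          exact hqs n _ hmem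
        · rw [hRsucc, map_mul]
          have happ : ∀ (u v : AddMonoid.End (Additive (Abelianization ↥H))) x,
              (u * v) x = u (v x) := fun u v x => rfl
          rw [happ, heval, aeval_end_apply]
          congr 1
          rw [← Eprod_comm Abelianization.of β f2 (fun x => of_intertwine β x)]
  -- conclude
  refine ⟨R c, hRm c, ?_⟩
  rw [← aeval_def]
  apply DFunLike.ext
  intro x
  obtain ⟨y, rfl⟩ : ∃ y : Abelianization ↥H, Additive.ofMul y = x := ⟨x.toMul, rfl⟩
  obtain ⟨h, rfl⟩ : ∃ h : ↥H, Abelianization.of h = y := by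
    refine QuotientGroup.induction_on y fun z => ⟨z, rfl⟩
  obtain ⟨h', hmem, heval⟩ := main c h
  rw [hc] at hmem
  have : h' = 1 := Subtype.ext (Subgroup.mem_bot.mp hmem)
  rw [this] at heval
  show (Polynomial.aeval (mEnd f2) (R c)) (Additive.ofMul (Abelianization.of h)) = 0
  rw [heval, map_one]
  rfl
end
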